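/- arXiv:2510.07515 — 14 statements merged into one kernel-verified Lean document; each statement's English description precedes it below -/
import Mathlib

section
/- Let q be a prime and let h_1, ..., h_m be a sequence of vectors in F_q^n with m > (q-1)n. Then there exists a nonempty subset S of {1,...,m} such that the sum over i in S of h_i equals 0. -/
open MvPolynomial Finset

/-- Olson / van Emde Boas zero-sum theorem: any sequence of more than `(q-1)*n`
vectors in `(ZMod q)^n` (q prime) has a nonempty zero-sum subsequence. -/
theorem zero_sum_subsequence (q n m : ℕ) (hq : q.Prime) (hm : (q - 1) * n < m)
    (h : Fin m → Fin n → ZMod q) :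
    ∃ S : Finset (Fin m), S.Nonempty ∧ ∑ i ∈ S, h i = 0 := by
  classical
  haveI : Fact q.Prime := ⟨hq⟩
  set f : Fin n → MvPolynomial (Fin m) (ZMod q) :=
    fun j => ∑ i, C (h i j) * (X i) ^ (q - 1) with hf
  have hdeg : ∀ j, (f j).totalDegree ≤ q - 1 := by
    intro j
    refine le_trans (totalDegree_finset_sum _ _) ?_
    apply Finset.sup_le
    intro i _
    calc (C (h i j) * (X i) ^ (q - 1)).totalDegree
        ≤ (C (h i j)).totalDegree + ((X i : MvPolynomial (Fin m) (ZMod q)) ^ (q - 1)).totalDegree :=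
          totalDegree_mul _ _
      _ ≤ 0 + (q - 1) * 1 := by
          gcongr
          · exact le_of_eq (totalDegree_C _)
          · exact le_trans (totalDegree_pow _ _) (by simp [totalDegree_X])
      _ = q - 1 := by ring
  have hsum : (∑ j, (f j).totalDegree) < Fintype.card (Fin m) := by
    calc (∑ j : Fin n, (f j).totalDegree) ≤ ∑ _j : Fin n, (q - 1) :=
          Finset.sum_le_sum fun j _ => hdeg j
      _ = n * (q - 1) := by simp [mul_comm]
      _ < m := by rwa [mul_comm]
      _ = Fintype.card (Fin m) := by simp
  have hdvd := char_dvd_card_solutions_of_fintype_sum_lt q hsum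
  -- 0 is a solution
  have h0 : ∀ j, eval (0 : Fin m → ZMod q) (f j) = 0 := by
    intro j
    simp only [hf, eval_sum, map_mul, eval_C, map_pow, eval_X]
    apply Finset.sum_eq_zero
    intro i _
    rw [Pi.zero_apply, zero_pow, mul_zero]
    have : 1 < q := hq.one_lt
    omega
  have hcardpos : 0 < Fintype.card { x : Fin m → ZMod q // ∀ j, eval x (f j) = 0 } :=
    Fintype.card_pos_iff.mpr ⟨⟨0, h0⟩⟩
  -- extract a nonzero solution
  have : ∃ x : Fin m → ZMod q, (∀ j, eval x (f j) = 0) ∧ x ≠ 0 := by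
    by_contra hcon
    push_neg at hcon
    have huniq : ∀ y : { x : Fin m → ZMod q // ∀ j, eval x (f j) = 0 }, y = ⟨0, h0⟩ := by
      rintro ⟨y, hy⟩
      have := hcon y hy
      simpa using this
    have := Fintype.card_le_one_iff.mpr (fun a b => (huniq a).trans (huniq b).symm)
    have hle := Nat.le_of_dvd hcardpos (by convert hdvd using 2)
    have := hq.two_le
    omega
  obtain ⟨x, hxsol, hxne⟩ := this
  classical
  refine ⟨Finset.univ.filter (fun i => x i ≠ 0), ?_, ?_⟩
  · rw [Finset.filter_nonempty_iff]
    obtain ⟨i, hi⟩ := Function.ne_iff.mp hxne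
    exact ⟨i, Finset.mem_univ i, by simpa using hi⟩
  · funext j
    have := hxsol j
    simp only [hf, eval_sum, map_mul, eval_C, map_pow, eval_X] at this
    rw [Finset.sum_apply, Pi.zero_apply]
    have hstep : ∑ i ∈ Finset.univ.filter (fun i => x i ≠ 0), h i j
        = ∑ i, h i j * x i ^ (q - 1) := by
      rw [Finset.sum_filter]
      apply Finset.sum_congr rfl
      intro i _
      split_ifs with hxi
      · rw [ZMod.pow_card_sub_one_eq_one hxi, mul_one]
      · have hx0 : x i = 0 := not_not.mp hxi
        rw [hx0, zero_pow (by have := hq.one_lt; omega : q - 1 ≠ 0), mul_zero]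
    rw [hstep, this]
end

section
/- Let q ≥ 3 be a prime. Given m ≥ (n+1)^2 vectors v_1, ..., v_m in F_3^n, there exist coefficients α_1, ..., α_m ∈ {0,1}, not all zero, such that α_1 v_1 + ... + α_m v_m = 0. (In other words, the F_3^n subset-sum problem always has a solution when m ≥ (n+1)^2.) -/
lemma dep_aux (n : ℕ) (u : Fin (n + 1) → Fin n → ZMod 3) :
    ∃ S T : Finset (Fin (n + 1)), Disjoint S T ∧ (S ∪ T).Nonempty ∧
      ∑ i ∈ S, u i = ∑ i ∈ T, u i := by
  have hli : ¬ LinearIndependent (ZMod 3) u := by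
    intro h
    have := h.fintype_card_le_finrank
    simp [Module.finrank_fin_fun] at this
  obtain ⟨g, hsum, i0, hi0⟩ := Fintype.not_linearIndependent_iff.mp hli
  refine ⟨Finset.univ.filter (fun i => g i = 1), Finset.univ.filter (fun i => g i = 2),
    ?_, ?_, ?_⟩
  · rw [Finset.disjoint_filter]
    intro i _ h1 h2
    rw [h1] at h2; exact absurd h2 (by decide)
  · refine ⟨i0, ?_⟩
    simp only [Finset.mem_union, Finset.mem_filter, Finset.mem_univ, true_and]
    revert hi0; generalize g i0 = x; revert x; decide
  · have key : (0 : Fin n → ZMod 3) =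
        ∑ i ∈ Finset.univ.filter (fun i => g i = 1), u i
          - ∑ i ∈ Finset.univ.filter (fun i => g i = 2), u i := by
      rw [← hsum]
      rw [← Finset.sum_filter_add_sum_filter_not Finset.univ (fun i => g i = 1)]
      rw [← Finset.sum_filter_add_sum_filter_not
        (Finset.univ.filter (fun i => ¬ g i = 1)) (fun i => g i = 2)]
      rw [Finset.filter_filter, Finset.filter_filter]
      have h1 : ∑ i ∈ Finset.univ.filter (fun i => g i = 1), g i • u i
          = ∑ i ∈ Finset.univ.filter (fun i => g i = 1), u i := by
        refine Finset.sum_congr rfl fun i hi => ?_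
        simp only [Finset.mem_filter] at hi
        rw [hi.2, one_smul]
      have h2 : ∑ i ∈ Finset.univ.filter (fun i => ¬ g i = 1 ∧ g i = 2), g i • u i
          = -∑ i ∈ Finset.univ.filter (fun i => g i = 2), u i := by
        rw [← Finset.sum_neg_distrib]
        have : Finset.univ.filter (fun i => ¬ g i = 1 ∧ g i = 2)
            = Finset.univ.filter (fun i => g i = 2) := by
          apply Finset.filter_congr
          intro i _
          constructor
          · exact fun h => h.2
          · intro h; exact ⟨by rw [h]; decide, h⟩
        rw [this]
        refine Finset.sum_congr rfl fun i hi => ?_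
        simp only [Finset.mem_filter] at hi
        rw [hi.2]
        show (2 : ZMod 3) • u i = -u i
        rw [show (2 : ZMod 3) = -1 by decide, neg_smul, one_smul]
      have h3 : ∑ i ∈ Finset.univ.filter (fun i => ¬ g i = 1 ∧ ¬ g i = 2), g i • u i = 0 := by
        refine Finset.sum_eq_zero fun i hi => ?_
        simp only [Finset.mem_filter] at hi
        have : g i = 0 := by
          have := hi.2
          revert this; generalize g i = x; revert x; decide
        rw [this, zero_smul]
      rw [h1, h2, h3, add_zero, sub_eq_add_neg]
    have := key.symm
    rwa [sub_eq_zero] at this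

/-- The `F_3^n` subset-sum problem always has a solution when `m ≥ (n+1)^2`. -/
theorem f3_subset_sum_of_sq (q : ℕ) (hq : q.Prime) (hq3 : 3 ≤ q) (n m : ℕ)
    (hm : (n + 1) ^ 2 ≤ m) (v : Fin m → Fin n → ZMod 3) :
    ∃ S : Finset (Fin m), S.Nonempty ∧ ∑ i ∈ S, v i = 0 := by
  have hmm : (n + 1) * (n + 1) ≤ m := by nlinarith
  set e : Fin (n + 1) × Fin (n + 1) → Fin m :=
    fun p => Fin.castLE hmm (finProdFinEquiv p) with he
  have einj : Function.Injective e := by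
    intro a b hab
    apply finProdFinEquiv.injective
    exact Fin.castLE_injective hmm hab
  set u : Fin (n + 1) → Fin (n + 1) → Fin n → ZMod 3 :=
    fun j k => v (e (j, k)) with hu
  -- per-block decompositions
  have hblocks : ∀ j, ∃ S T : Finset (Fin (n + 1)), Disjoint S T ∧ (S ∪ T).Nonempty ∧
      ∑ k ∈ S, u j k = ∑ k ∈ T, u j k := fun j => dep_aux n (u j)
  choose S T hdisj hne hsum using hblocks
  -- injectivity of a block's embedding
  have einjb : ∀ j : Fin (n + 1), Function.Injective (fun k => e (j, k)) := by
    intro j a b hab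
    have := einj hab
    exact (Prod.mk.injEq _ _ _ _ ▸ this).2
  by_cases hS : ∃ j, S j = ∅
  · obtain ⟨j, hj⟩ := hS
    refine ⟨(T j).image (fun k => e (j, k)), ?_, ?_⟩
    · have : (T j).Nonempty := by
        have := hne j; rw [hj, Finset.empty_union] at this; exact this
      exact this.image _
    · rw [Finset.sum_image (fun a _ b _ h => einjb j h)]
      have := hsum j; rw [hj, Finset.sum_empty] at this
      exact this.symm
  by_cases hT : ∃ j, T j = ∅
  · obtain ⟨j, hj⟩ := hT
    refine ⟨(S j).image (fun k => e (j, k)), ?_, ?_⟩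
    · have : (S j).Nonempty := by
        have := hne j; rw [hj, Finset.union_empty] at this; exact this
      exact this.image _
    · rw [Finset.sum_image (fun a _ b _ h => einjb j h)]
      have := hsum j; rw [hj, Finset.sum_empty] at this
      exact this
  push_neg at hS hT
  have hSne : ∀ j, (S j).Nonempty := fun j => hS j
  -- second level
  set w : Fin (n + 1) → Fin n → ZMod 3 := fun j => ∑ k ∈ S j, u j k with hw
  obtain ⟨G, H, hGH, hGHne, hGHsum⟩ := dep_aux n w
  set c : Fin (n + 1) → Finset (Fin (n + 1)) :=
    fun j => if j ∈ G then S j else if j ∈ H then S j ∪ T j else ∅ with hc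
  set P : Finset (Fin (n + 1) × Fin (n + 1)) :=
    Finset.univ.filter (fun p => p.2 ∈ c p.1) with hP
  refine ⟨P.image e, ?_, ?_⟩
  · obtain ⟨j0, hj0⟩ := hGHne
    rw [Finset.mem_union] at hj0
    have hcne : (c j0).Nonempty := by
      rcases hj0 with h | h
      · simp only [hc, h, if_pos]; exact hSne j0
      · have : j0 ∉ G := fun hg => (Finset.disjoint_left.mp hGH hg) h
        simp only [hc, this, h, if_neg, if_pos, ite_false, ite_true]
        exact (hSne j0).mono Finset.subset_union_left
    obtain ⟨k0, hk0⟩ := hcne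
    refine ⟨e (j0, k0), Finset.mem_image_of_mem _ ?_⟩
    simp [hP, hk0]
  · rw [Finset.sum_image (fun a _ b _ h => einj h)]
    have hsplit : ∑ p ∈ P, v (e p) = ∑ j : Fin (n + 1), ∑ k ∈ c j, u j k := by
      rw [hP, Finset.sum_filter, Fintype.sum_prod_type]
      refine Finset.sum_congr rfl fun j _ => ?_
      show (∑ y : Fin (n + 1), if y ∈ c j then v (e (j, y)) else 0) = _
      rw [Finset.sum_ite_mem, Finset.univ_inter]
    rw [hsplit]
    have hval : ∀ j, ∑ k ∈ c j, u j k
        = (if j ∈ G then w j else 0) + (if j ∈ H then -(w j) else 0) := by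
      intro j
      by_cases hg : j ∈ G
      · have hh : j ∉ H := fun h => (Finset.disjoint_left.mp hGH hg) h
        simp [hc, hg, hh, hw]
      · by_cases hh : j ∈ H
        · simp only [hc, hg, hh, if_neg, if_pos, ite_false, ite_true, zero_add]
          rw [Finset.sum_union (hdisj j)]
          have hs : ∑ k ∈ S j, u j k = w j := rfl
          have ht : ∑ k ∈ T j, u j k = w j := (hsum j).symm
          rw [hs, ht]
          calc w j + w j = (2 : ZMod 3) • w j := by rw [two_smul]
            _ = -(w j) := by
                rw [show (2 : ZMod 3) = -1 by decide, neg_smul, one_smul]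
        · simp [hc, hg, hh]
    simp_rw [hval]
    rw [Finset.sum_add_distrib]
    rw [Finset.sum_ite_mem, Finset.sum_ite_mem, Finset.univ_inter, Finset.univ_inter]
    rw [Finset.sum_neg_distrib, hGHsum]
    ·
      abel
end

section
/- For every integer ℓ ≥ 0, given m ≥ (ℓ+1)(ℓ+2)/2 vectors lying in an ℓ-dimensional linear subspace V of F_3^n, there exists a nonempty subset of them summing to 0. -/
open Finset

lemma prod_eq_zero_of_cube_zero {R : Type*} [CommRing R] {ℓ N : ℕ}
    (e : Fin ℓ → R) (he : ∀ j, e j ^ 3 = 0) (hN : 2 * ℓ + 1 ≤ N)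
    (x : Fin N → R) (hx : ∀ i, x i ∈ Ideal.span (Set.range e)) :
    ∏ i, x i = 0 := by
  have hmem : ∏ i, x i ∈ (Ideal.span (Set.range e)) ^ N := by
    have := Ideal.prod_mem_prod (s := (univ : Finset (Fin N)))
      (I := fun _ => Ideal.span (Set.range e)) (x := x) (fun i _ => hx i)
    simpa [Finset.prod_const] using this
  have hbot : (Ideal.span (Set.range e)) ^ (2 * ℓ + 1) = ⊥ := by
    rw [Ideal.span, Submodule.span_pow]
    rw [Submodule.span_eq_bot]
    intro y hy
    rw [Set.mem_pow] at hy
    obtain ⟨f, hf⟩ := hy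
    -- f : Fin (2ℓ+1) → (range e), product = y
    -- choose j i with e (j i) = f i
    choose j hj using fun i => (f i).2
    -- y = ∏ i, e (j i)
    have hy' : y = ∏ i, e (j i) := by
      rw [← hf, List.prod_ofFn]
      exact Finset.prod_congr rfl fun i _ => (hj i).symm
    -- pigeonhole: some j₀ has fiber of card ≥ 3
    by_contra hy0
    have hcard : ∀ j₀ : Fin ℓ, (univ.filter (fun i => j i = j₀)).card ≤ 2 := by
      intro j₀
      by_contra h
      push_neg at h
      apply hy0
      rw [hy', ← Finset.prod_filter_mul_prod_filter_not univ (fun i => j i = j₀)]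
      have : ∏ i ∈ univ.filter (fun i => j i = j₀), e (j i) = 0 := by
        rw [Finset.prod_congr rfl (fun i hi => by
          rw [(Finset.mem_filter.mp hi).2]), Finset.prod_const]
        have h3 : e j₀ ^ 3 = 0 := he j₀
        calc e j₀ ^ (univ.filter (fun i => j i = j₀)).card
            = e j₀ ^ 3 * e j₀ ^ ((univ.filter (fun i => j i = j₀)).card - 3) := by
              rw [← pow_add]; congr 1; omega
          _ = 0 := by rw [h3, zero_mul]
      rw [this, zero_mul]
    have : (univ : Finset (Fin (2*ℓ+1))).card ≤ ∑ j₀ : Fin ℓ, 2 := by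
      rw [Finset.card_eq_sum_card_fiberwise (f := j) (t := univ) (fun i _ => mem_univ _)]
      exact Finset.sum_le_sum fun j₀ _ => hcard j₀
    simp at this
    omega
  have : ∏ i, x i ∈ (⊥ : Ideal R) := hbot ▸ (Ideal.pow_le_pow_right hN) hmem
  simpa using this

/-- Among any `(ℓ+1)(ℓ+2)/2` vectors in an `ℓ`-dimensional subspace of `F_3^n`
there is a nonempty subset summing to zero. -/
theorem f3_subset_sum_subspace (n ℓ m : ℕ)
    (V : Submodule (ZMod 3) (Fin n → ZMod 3))
    (hV : Module.finrank (ZMod 3) V = ℓ)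
    (hm : (ℓ + 1) * (ℓ + 2) / 2 ≤ m)
    (v : Fin m → Fin n → ZMod 3) (hv : ∀ i, v i ∈ V) :
    ∃ S : Finset (Fin m), S.Nonempty ∧ ∑ i ∈ S, v i = 0 := by
  by_contra hcon
  push_neg at hcon
  have hm' : 2 * ℓ + 1 ≤ m := by
    have heven : (ℓ + 1) * (ℓ + 2) / 2 * 2 = (ℓ + 1) * (ℓ + 2) :=
      Nat.div_mul_cancel (Nat.even_mul_succ_self (ℓ + 1)).two_dvd
    have hl : ℓ ≤ ℓ * ℓ := by
      cases ℓ with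
      | zero => simp
      | succ k => exact Nat.le_mul_of_pos_left _ (Nat.succ_pos k)
    nlinarith [hm, heven, hl]
  set g : Fin m → V := fun i => ⟨v i, hv i⟩ with hg
  have hgsum : ∀ S : Finset (Fin m), S.Nonempty → ∑ i ∈ S, g i ≠ 0 := by
    intro S hS h0
    apply hcon S hS
    have : ((∑ i ∈ S, g i : V) : Fin n → ZMod 3) = 0 := by rw [h0]; rfl
    simpa using this
  set R := AddMonoidAlgebra (ZMod 3) V with hR
  have h3R : (3 : R) = 0 := by
    rw [show (3 : R) = ((3 : ℕ) : R) by norm_num, AddMonoidAlgebra.natCast_def,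
      show ((3 : ℕ) : ZMod 3) = 0 by decide]
    exact AddMonoidAlgebra.single_zero 0
  set δ : V → R := fun w => AddMonoidAlgebra.single w 1 - 1 with hδdef
  have hsingle3 : ∀ w : V, (3 : ℕ) • w = 0 := by
    intro w
    rw [← Nat.cast_smul_eq_nsmul (ZMod 3),
      show ((3 : ℕ) : ZMod 3) = 0 by decide, zero_smul]
  have hcube : ∀ w : V, δ w ^ 3 = 0 := by
    intro w
    have hx3 : (AddMonoidAlgebra.single w 1 : R) ^ 3 = 1 := by
      rw [AddMonoidAlgebra.single_pow, hsingle3 w, one_pow]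
      rfl
    simp only [hδdef]
    linear_combination (AddMonoidAlgebra.single w 1 - (AddMonoidAlgebra.single w 1 : R) ^ 2) * h3R + hx3
  have hfin : Module.Finite (ZMod 3) V := inferInstance
  let b : Module.Basis (Fin ℓ) (ZMod 3) V := Module.finBasisOfFinrankEq (ZMod 3) V hV
  set e : Fin ℓ → R := fun j => δ (b j) with he
  set I : Ideal R := Ideal.span (Set.range e) with hI
  have hδadd : ∀ w u : V, δ w ∈ I → δ u ∈ I → δ (w + u) ∈ I := by
    intro w u hw hu
    have key : (AddMonoidAlgebra.single w 1 : R) * AddMonoidAlgebra.single u 1 =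
        AddMonoidAlgebra.single (w + u) 1 := by
      rw [AddMonoidAlgebra.single_mul_single, one_mul]
    have : δ (w + u) = δ w * δ u + δ w + δ u := by
      simp only [hδdef]
      rw [← key]; ring
    rw [this]
    exact add_mem (add_mem (Ideal.mul_mem_right _ _ hw) hw) hu
  have hδ0 : δ 0 ∈ I := by
    have : δ (0 : V) = 0 := by
      simp only [hδdef]
      rw [sub_eq_zero]
      rfl
    rw [this]; exact zero_mem I
  have hδnsmul : ∀ (k : ℕ) (w : V), δ w ∈ I → δ (k • w) ∈ I := by
    intro k
    induction k with
    | zero => intro w _; simpa using hδ0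
    | succ k ih =>
      intro w hw
      rw [succ_nsmul]
      exact hδadd _ _ (ih w hw) hw
  have hδmem : ∀ w : V, δ w ∈ I := by
    intro w
    have hw : w ∈ Submodule.span (ZMod 3) (Set.range b) := by
      rw [b.span_eq]; trivial
    induction hw using Submodule.span_induction with
    | mem x hx =>
      obtain ⟨j, rfl⟩ := hx
      exact Ideal.subset_span ⟨j, rfl⟩
    | zero => exact hδ0
    | add x y _ _ hx hy => exact hδadd _ _ hx hy
    | smul c x _ hx =>
      have hcx : c • x = (c.val : ℕ) • x := by
        conv_lhs => rw [show c = ((c.val : ℕ) : ZMod 3) by simp [ZMod.natCast_val, ZMod.cast_id]]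
        rw [Nat.cast_smul_eq_nsmul]
      rw [hcx]
      exact hδnsmul _ _ hx
  have hprod0 : ∏ i : Fin m, δ (g i) = 0 :=
    prod_eq_zero_of_cube_zero e (fun j => hcube (b j)) hm' _ (fun i => hδmem (g i))
  have hneg1 : (-1 : R) = AddMonoidAlgebra.single (0 : V) (-1 : ZMod 3) := by
    have h1 : AddMonoidAlgebra.single (0 : V) (-1 : ZMod 3) + 1 = 0 := by
      rw [AddMonoidAlgebra.one_def, ← AddMonoidAlgebra.single_add]
      norm_num
    linear_combination -h1
  have hnegpow : ∀ k : ℕ, (-1 : R) ^ k = AddMonoidAlgebra.single (0 : V) ((-1 : ZMod 3) ^ k) := by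
    intro k
    rw [hneg1, AddMonoidAlgebra.single_pow, smul_zero]
  have hexp : ∏ i : Fin m, δ (g i) =
      ∑ t ∈ (univ : Finset (Fin m)).powerset,
        AddMonoidAlgebra.single (∑ i ∈ t, g i) ((-1 : ZMod 3) ^ (m - t.card)) := by
    simp only [hδdef, sub_eq_add_neg]
    rw [Finset.prod_add]
    refine Finset.sum_congr rfl fun t ht => ?_
    rw [Finset.prod_const]
    have h1 : ∏ i ∈ t, (AddMonoidAlgebra.single (g i) 1 : R) =
        AddMonoidAlgebra.single (∑ i ∈ t, g i) (∏ i ∈ t, (1 : ZMod 3)) :=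
      AddMonoidAlgebra.prod_single _ _ _
    have hcard : (univ \ t).card = m - t.card := by
      rw [Finset.card_sdiff_of_subset (Finset.mem_powerset.mp ht)]
      simp
    rw [h1, Finset.prod_const_one, hcard, hnegpow, AddMonoidAlgebra.single_mul_single,
      add_zero, one_mul]
  -- evaluate coefficient at 0
  let φ : R →+ ZMod 3 := (Finsupp.applyAddHom (0 : V)).comp (AddMonoidAlgebra.coeffAddEquiv (R := ZMod 3) (M := V)).toAddMonoidHom
  have hval : ∑ t ∈ (univ : Finset (Fin m)).powerset,
      φ (AddMonoidAlgebra.single (∑ i ∈ t, g i) ((-1 : ZMod 3) ^ (m - t.card))) = 0 := by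
    have h0' : φ (∏ i : Fin m, δ (g i)) = 0 := by rw [hprod0]; exact map_zero φ
    rw [hexp, map_sum] at h0'
    exact h0'
  rw [Finset.sum_eq_single (∅ : Finset (Fin m))] at hval
  · rw [Finset.sum_empty] at hval
    have hval' : (AddMonoidAlgebra.single (0 : V)
        ((-1 : ZMod 3) ^ (m - (∅ : Finset (Fin m)).card))).coeff (0 : V) = 0 := hval
    rw [AddMonoidAlgebra.coeff_single_apply, if_pos rfl] at hval'
    simp only [Finset.card_empty, Nat.sub_zero] at hval'
    exact pow_ne_zero m (by decide : (-1 : ZMod 3) ≠ 0) hval'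
  · intro t _ htne
    show (AddMonoidAlgebra.single (∑ i ∈ t, g i) ((-1 : ZMod 3) ^ (m - t.card))).coeff (0 : V) = 0
    rw [AddMonoidAlgebra.coeff_single_apply, if_neg]
    exact fun h => hgsum t (Finset.nonempty_of_ne_empty htne) h
  · intro h
    exact absurd (Finset.empty_mem_powerset _) h
end

section
/- Let h > 1 be an integer and let v_1, ..., v_m be vectors in F_q^n (q an odd prime) admitting a nontrivial (±h)-zero-sum, i.e., integers α_i with |α_i| ≤ h, not all zero, and Σ α_i v_i = 0 in F_q^n. Then there exists a vector u which is a nontrivial (±1)-sum of the v_i (u = Σ β_i v_i with β_i ∈ {-1,0,1} not all zero), and such that for every integer c with |c| ≤ h, the vector c·u is a (±⌊h/2⌋)-sum of the v_i. -/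
/-- Key step: if a `(±h)`-zero-sum has some coefficient of absolute value
exceeding `H = ⌊h/2⌋`, the desired reducible vector exists. -/
lemma key_reducible (q n m : ℕ) (h H : ℤ) (hH1 : 1 ≤ H) (hHh : 2 * H ≤ h)
    (hh2 : h ≤ 2 * H + 1)
    (v : Fin m → Fin n → ZMod q) (α : Fin m → ℤ)
    (hα : ∀ i, |α i| ≤ h) (hex : ∃ j, H < |α j|)
    (hsum : ∑ i, (α i : ZMod q) • v i = 0) :
    ∃ β : Fin m → ℤ, (∀ i, |β i| ≤ 1) ∧ β ≠ 0 ∧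
      ∀ c : ℤ, |c| ≤ h → ∃ γ : Fin m → ℤ, (∀ i, |γ i| ≤ H) ∧
        (c : ZMod q) • (∑ i, (β i : ZMod q) • v i) = ∑ i, (γ i : ZMod q) • v i := by
  classical
  obtain ⟨j, hj⟩ := hex
  set β : Fin m → ℤ := fun i => if H < α i then 1 else if α i < -H then -1 else 0
    with hβ
  refine ⟨β, ?_, ?_, ?_⟩
  · intro i
    rw [abs_le]
    simp only [hβ]
    split_ifs <;> omega
  · intro h0
    have hj' := abs_le.mp (hα j)
    rcases abs_cases (α j) with ⟨he, _⟩ | ⟨he, _⟩ <;>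
    · have hbj : β j = 0 := by rw [h0]; rfl
      simp only [hβ] at hbj
      split_ifs at hbj <;> omega
  · intro c hc
    set t : ℤ := if H < c then 1 else if c < -H then -1 else 0 with htdef
    refine ⟨fun i => c * β i - t * α i, ?_, ?_⟩
    · intro i
      have h1 := abs_le.mp (hα i)
      have h2 := abs_le.mp hc
      rw [abs_le]
      simp only [hβ, htdef]
      split_ifs <;> constructor <;> omega
    · have hterm : ∀ i : Fin m, ((c * β i - t * α i : ℤ) : ZMod q) • v i
          = (c : ZMod q) • ((β i : ZMod q) • v i)
            - (t : ZMod q) • ((α i : ZMod q) • v i) := by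
        intro i
        push_cast
        rw [sub_smul, mul_smul, mul_smul]
      rw [Finset.sum_congr rfl (fun i _ => hterm i), Finset.sum_sub_distrib,
        ← Finset.smul_sum, ← Finset.smul_sum, hsum, smul_zero, sub_zero]

/-- From a nontrivial `(±h)`-zero-sum one obtains a `(±h → ±⌊h/2⌋)`-reducible
vector: a nontrivial `(±1)`-sum `u` such that every `c·u` with `|c| ≤ h` is a
`(±⌊h/2⌋)`-sum of the `v i`. -/
theorem reducible_of_zero_sum (q : ℕ) (hq : q.Prime) (hodd : Odd q)
    (n m : ℕ) (h : ℤ) (hh : 1 < h)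
    (v : Fin m → Fin n → ZMod q) (α : Fin m → ℤ)
    (hα : ∀ i, |α i| ≤ h) (hne : α ≠ 0)
    (hsum : ∑ i, (α i : ZMod q) • v i = 0) :
    ∃ β : Fin m → ℤ, (∀ i, |β i| ≤ 1) ∧ β ≠ 0 ∧
      ∀ c : ℤ, |c| ≤ h → ∃ γ : Fin m → ℤ, (∀ i, |γ i| ≤ h / 2) ∧
        (c : ZMod q) • (∑ i, (β i : ZMod q) • v i) = ∑ i, (γ i : ZMod q) • v i := by
  classical
  set H := h / 2 with hHdef
  have hH1 : 1 ≤ H := by omega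
  have hHh : 2 * H ≤ h := by omega
  have hh2 : h ≤ 2 * H + 1 := by omega
  by_cases hex : ∃ j, H < |α j|
  · exact key_reducible q n m h H hH1 hHh hh2 v α hα hex hsum
  · push_neg at hex
    obtain ⟨j, hj⟩ : ∃ j, α j ≠ 0 := by
      by_contra hco
      push_neg at hco
      exact hne (funext hco)
    have hnonempty : (Finset.univ : Finset (Fin m)).Nonempty := ⟨j, Finset.mem_univ j⟩
    set a := Finset.univ.sup' hnonempty (fun i => |α i|) with ha
    have haj : |α j| ≤ a := by rw [ha]; exact Finset.le_sup' (fun i => |α i|) (Finset.mem_univ j)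
    have ha1 : 1 ≤ a := le_trans (Int.one_le_abs hj) haj
    obtain ⟨j', -, hj'⟩ := Finset.exists_mem_eq_sup' hnonempty (fun i => |α i|)
    set t := (H + a) / a with htdef
    have hmod1 := Int.emod_nonneg (H + a) (by omega : a ≠ 0)
    have hmod2 := Int.emod_lt_of_pos (H + a) (by omega : 0 < a)
    have heq := Int.mul_ediv_add_emod (H + a) a
    have hta : a * t = H + a - (H + a) % a := by
      rw [htdef]; linarith [heq]
    have tlow : H + 1 ≤ a * t := by omega
    have thigh : a * t ≤ H + a := by omega
    have ht1 : 1 ≤ t := by nlinarith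
    have haux : ∀ i, |α i| ≤ a := by
      intro i; rw [ha]; exact Finset.le_sup' (fun i => |α i|) (Finset.mem_univ i)
    have hα' : ∀ i, |t * α i| ≤ h := by
      intro i
      rw [abs_mul, abs_of_pos (by omega : (0:ℤ) < t)]
      have := mul_le_mul_of_nonneg_left (haux i) (by omega : (0:ℤ) ≤ t)
      have hia := hex i
      nlinarith
    have hex' : ∃ j'', H < |t * α j''| := by
      refine ⟨j', ?_⟩
      rw [abs_mul, abs_of_pos (by omega : (0:ℤ) < t), ← hj']
      nlinarith
    have hsum' : ∑ i, ((t * α i : ℤ) : ZMod q) • v i = 0 := by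
      have hterm : ∀ i : Fin m, ((t * α i : ℤ) : ZMod q) • v i
          = (t : ZMod q) • ((α i : ZMod q) • v i) := by
        intro i; push_cast; rw [mul_smul]
      rw [Finset.sum_congr rfl (fun i _ => hterm i), ← Finset.smul_sum, hsum,
        smul_zero]
    exact key_reducible q n m h H hH1 hHh hh2 v (fun i => t * α i) hα' hex' hsum'
end

section
/- Let q ≥ 3 be a prime and let k with 1 ≤ k ≤ ⌊q/2⌋ be an integer power of 2. Then for any m ≥ (n+1)^k vectors v_1, ..., v_m in F_q^n, there exist integers α_1, ..., α_m with |α_i| ≤ ⌊q/(2k)⌋, not all zero, such that α_1 v_1 + ... + α_m v_m = 0 in F_q^n. -/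
private lemma sis_bern (n j : ℕ) : n * j + 1 ≤ (n + 1) ^ j := by
  induction j with
  | zero => simp
  | succ j ih =>
    have h2 : (n * j + 1) * (n + 1) ≤ (n + 1) ^ j * (n + 1) :=
      Nat.mul_le_mul_right _ ih
    have e : (n * j + 1) * (n + 1) = n * n * j + n * j + n + 1 := by ring
    have e2 : n * (j + 1) + 1 = n * j + n + 1 := by ring
    rw [e2, pow_succ]
    linarith [Nat.zero_le (n * n * j)]

private lemma sis_aux2 (n j : ℕ) (hn : 1 ≤ n) (hj : 1 ≤ j) :
    n * (j + 2) ≤ (n + 1) ^ (j + 1) := by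
  have h2 : (n * j + 1) * (n + 1) ≤ (n + 1) ^ j * (n + 1) :=
    Nat.mul_le_mul_right _ (sis_bern n j)
  have e : (n * j + 1) * (n + 1) = n * n * j + n * j + n + 1 := by ring
  have e2 : n * (j + 2) = n * j + 2 * n := by ring
  have h3 : n ≤ n * n * j := by
    calc n = n * 1 * 1 := by ring
      _ ≤ n * n * j := Nat.mul_le_mul (Nat.mul_le_mul (le_refl n) hn) hj
  rw [e2, ← pow_succ] at *
  linarith [Nat.zero_le (n * n * j)]

private lemma sis_div_succ (a b : ℕ) (hb : 0 < b) : a + 1 ≤ (a / b + 1) * b := by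
  have h2 := Nat.div_add_mod a b
  have h1 := Nat.mod_lt a hb
  have e : (a / b + 1) * b = b * (a / b) + b := by ring
  rw [e]
  linarith

/-- For `k` a power of two with `1 ≤ k ≤ ⌊q/2⌋` and `m ≥ (n+1)^k` vectors in
`F_q^n`, there is a nontrivial `(±⌊q/(2k)⌋)`-zero-sum. -/
theorem sis_halving (q : ℕ) (hq : q.Prime) (hq3 : 3 ≤ q)
    (k : ℕ) (hk : ∃ j : ℕ, k = 2 ^ j) (hk1 : 1 ≤ k) (hk2 : k ≤ q / 2)
    (n m : ℕ) (hm : (n + 1) ^ k ≤ m)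
    (v : Fin m → Fin n → ZMod q) :
    ∃ α : Fin m → ℤ, (∀ i, |α i| ≤ (q / (2 * k) : ℕ)) ∧ α ≠ 0 ∧
      ∑ i, (α i : ZMod q) • v i = 0 := by
  haveI : Fact q.Prime := ⟨hq⟩
  haveI : NeZero q := ⟨by omega⟩
  have h2k : 2 * k ≤ q := by
    have := (Nat.le_div_iff_mul_le (by norm_num : 0 < 2)).mp hk2
    omega
  have hh1 : 1 ≤ q / (2 * k) := (Nat.one_le_div_iff (by omega)).mpr h2k
  -- trivial case n = 0
  rcases Nat.eq_zero_or_pos n with hn | hn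
  · subst hn
    have hm1 : 1 ≤ m := by simpa using hm
    refine ⟨fun _ => 1, fun i => ?_, ?_, ?_⟩
    · simp only [abs_one]
      exact_mod_cast hh1
    · intro h
      have := congrFun h ⟨0, hm1⟩
      simp at this
    · funext x; exact x.elim0
  obtain ⟨j, rfl⟩ := hk
  rcases Nat.eq_zero_or_pos j with hj | hj
  -- case k = 1 : linear dependence
  · subst hj
    simp only [pow_zero, pow_one] at hm ⊢
    have hdep : ¬ LinearIndependent (ZMod q) v := by
      intro hli
      have hcard := hli.fintype_card_le_finrank
      rw [Module.finrank_fin_fun] at hcard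
      simp only [Fintype.card_fin] at hcard
      omega
    rw [Fintype.not_linearIndependent_iff] at hdep
    obtain ⟨c, hsum, i0, hi0⟩ := hdep
    refine ⟨fun i => (c i).valMinAbs, ?_, ?_, ?_⟩
    · intro i
      have hb := ZMod.natAbs_valMinAbs_le (c i)
      have h21 : (2 : ℕ) * 1 = 2 := by norm_num
      rw [h21, Int.abs_eq_natAbs]
      exact_mod_cast hb
    · intro h
      apply hi0
      have := congrFun h i0
      simp only [Pi.zero_apply] at this
      rwa [ZMod.valMinAbs_eq_zero] at this
    · simpa only [ZMod.coe_valMinAbs] using hsum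
  -- case k = 2^j, j ≥ 1 : pigeonhole
  · have hq1 : q + 1 ≤ (q / (2 * 2 ^ j) + 1) * (2 * 2 ^ j) :=
      sis_div_succ q _ (by positivity)
    have hmn : n * (j + 2) ≤ m := by
      calc n * (j + 2) ≤ (n + 1) ^ (j + 1) := sis_aux2 n j hn hj
        _ ≤ (n + 1) ^ (2 ^ j) := Nat.pow_le_pow_right (by omega) (Nat.lt_two_pow_self (n := j))
        _ ≤ m := hm
    have hpow : 2 * 2 ^ j = 2 ^ (j + 1) := by rw [pow_succ]; ring
    have hcount : q ^ n < (q / (2 * 2 ^ j) + 1) ^ m := by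
      calc q ^ n < (q + 1) ^ n := Nat.pow_lt_pow_left (by omega) (by omega)
        _ ≤ ((q / (2 * 2 ^ j) + 1) * (2 * 2 ^ j)) ^ n := Nat.pow_le_pow_left hq1 n
        _ = (q / (2 * 2 ^ j) + 1) ^ n * (2 ^ (j + 1)) ^ n := by rw [mul_pow, hpow]
        _ ≤ (q / (2 * 2 ^ j) + 1) ^ n * ((q / (2 * 2 ^ j) + 1) ^ (j + 1)) ^ n := by
            apply Nat.mul_le_mul_left
            apply Nat.pow_le_pow_left
            exact Nat.pow_le_pow_left (by omega) _
        _ = (q / (2 * 2 ^ j) + 1) ^ (n * (j + 2)) := by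
            rw [← pow_mul, ← pow_add]
            congr 1
            ring
        _ ≤ (q / (2 * 2 ^ j) + 1) ^ m := Nat.pow_le_pow_right (by omega) hmn
    -- pigeonhole
    set F : (Fin m → Fin (q / (2 * 2 ^ j) + 1)) → (Fin n → ZMod q) :=
      fun β => ∑ i, ((β i : ℕ) : ZMod q) • v i with hF
    have hclt : Fintype.card (Fin n → ZMod q)
        < Fintype.card (Fin m → Fin (q / (2 * 2 ^ j) + 1)) := by
      rw [Fintype.card_fun, Fintype.card_fun]
      simpa [ZMod.card] using hcount
    obtain ⟨β, β', hne, heq⟩ := Fintype.exists_ne_map_eq_of_card_lt F hclt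
    refine ⟨fun i => ((β i : ℕ) : ℤ) - ((β' i : ℕ) : ℤ), ?_, ?_, ?_⟩
    · intro i
      have b1 : (β i : ℕ) ≤ q / (2 * 2 ^ j) := Nat.lt_succ_iff.mp (β i).isLt
      have b2 : (β' i : ℕ) ≤ q / (2 * 2 ^ j) := Nat.lt_succ_iff.mp (β' i).isLt
      dsimp only
      rw [abs_le]
      constructor <;> omega
    · intro hzero
      obtain ⟨i, hi⟩ := Function.ne_iff.mp hne
      apply hi
      have := congrFun hzero i
      simp only [Pi.zero_apply, sub_eq_zero] at this
      exact Fin.ext (by exact_mod_cast this)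
    · have key : ∀ i : Fin m,
          ((((β i : ℕ) : ℤ) - ((β' i : ℕ) : ℤ) : ℤ) : ZMod q) • v i
            = ((β i : ℕ) : ZMod q) • v i - ((β' i : ℕ) : ZMod q) • v i := by
        intro i
        push_cast
        rw [sub_smul]
      calc ∑ i, ((((β i : ℕ) : ℤ) - ((β' i : ℕ) : ℤ) : ℤ) : ZMod q) • v i
          = ∑ i, (((β i : ℕ) : ZMod q) • v i - ((β' i : ℕ) : ZMod q) • v i) :=
            Finset.sum_congr rfl (fun i _ => key i)
        _ = F β - F β' := by rw [Finset.sum_sub_distrib]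
        _ = 0 := by rw [heq, sub_self]
end

section
/- Let q be a prime and r ≥ 1 an integer. Given ℓ + r vectors lying in a linear subspace of F_q^n of dimension ℓ, there exists a nontrivial F_q-linear combination of them equal to zero whose support (set of nonzero coefficients) has size at most ((1 - q^{-1})/(1 - q^{-r})) · ℓ + r. -/
open Finset in
private lemma sparse_dep_aux_real (Q A B W L R : ℝ) (hQ : 2 ≤ Q) (hQA : Q ≤ A) (hAB : A ≤ B)
    (hL : 0 ≤ L) (hR1 : 1 ≤ R)
    (h : Q * ((B - 1) * W) + (L + R) * B ≤ (L + R) * (Q * B)) :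
    W ≤ (1 - Q⁻¹) / (1 - A⁻¹) * L + R := by
  have hA1 : 1 < A := by linarith
  have hB1 : 1 < B := by linarith
  have hposA : 0 < Q * (A - 1) := by nlinarith
  have hposB : 0 < Q * (B - 1) := by nlinarith
  have step1 : W * (Q * (B - 1)) ≤ (L + R) * ((Q - 1) * B) := by nlinarith
  have step2 : W * (Q * (A - 1)) * (Q * (B - 1)) ≤ (L + R) * ((Q - 1) * A) * (Q * (B - 1)) := by
    have e1 : W * (Q * (A - 1)) * (Q * (B - 1)) = W * (Q * (B - 1)) * (Q * (A - 1)) := by ring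
    rw [e1]
    calc W * (Q * (B - 1)) * (Q * (A - 1))
        ≤ (L + R) * ((Q - 1) * B) * (Q * (A - 1)) :=
          mul_le_mul_of_nonneg_right step1 hposA.le
      _ ≤ (L + R) * ((Q - 1) * A) * (Q * (B - 1)) := by
          nlinarith [mul_nonneg (mul_nonneg (by linarith : (0:ℝ) ≤ L + R)
            (mul_nonneg (by linarith : (0:ℝ) ≤ Q - 1) (by linarith : (0:ℝ) ≤ Q)))
            (by linarith : (0:ℝ) ≤ B - A)]
  have step3 : W * (Q * (A - 1)) ≤ (L + R) * ((Q - 1) * A) :=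
    le_of_mul_le_mul_right step2 hposB
  have step4 : R * ((Q - 1) * A) ≤ R * (Q * (A - 1)) := by nlinarith
  have hAinv : (0:ℝ) < 1 - A⁻¹ := by
    have : A⁻¹ < 1 := inv_lt_one_of_one_lt₀ hA1
    linarith
  have hcoef : (1 - Q⁻¹) / (1 - A⁻¹) = ((Q - 1) * A) / (Q * (A - 1)) := by
    rw [div_eq_div_iff (ne_of_gt hAinv) (ne_of_gt hposA)]
    field_simp
  rw [hcoef, div_mul_eq_mul_div, ← sub_le_iff_le_add, le_div_iff₀ hposA, sub_mul]
  nlinarith [step3, step4]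

open Finset in
/-- Among `ℓ + r` vectors in an `ℓ`-dimensional subspace of `F_q^n` there is a
nontrivial zero linear combination with support of size at most
`((1 - q⁻¹)/(1 - q^{-r}))·ℓ + r`. -/

theorem sparse_dependence (q : ℕ) (hq : q.Prime) (r ℓ n : ℕ) (hr : 1 ≤ r)
    (V : Submodule (ZMod q) (Fin n → ZMod q))
    (hV : Module.finrank (ZMod q) V = ℓ)
    (v : Fin (ℓ + r) → Fin n → ZMod q) (hv : ∀ i, v i ∈ V) :
    ∃ α : Fin (ℓ + r) → ZMod q, α ≠ 0 ∧ (∑ i, α i • v i) = 0 ∧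
      ((Finset.univ.filter fun i => α i ≠ 0).card : ℝ) ≤
        ((1 - (q : ℝ)⁻¹) / (1 - ((q : ℝ) ^ r)⁻¹)) * ℓ + r := by
  classical
  haveI : Fact q.Prime := ⟨hq⟩
  haveI : NeZero q := ⟨hq.ne_zero⟩
  set w : Fin (ℓ + r) → V := fun i => ⟨v i, hv i⟩ with hwdef
  set φ : (Fin (ℓ + r) → ZMod q) →ₗ[ZMod q] V :=
    Fintype.linearCombination (ZMod q) w with hφ
  set K := LinearMap.ker φ with hKdef
  haveI : Fintype K := Fintype.ofFinite _
  -- rank of the kernel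
  have hrank : r ≤ Module.finrank (ZMod q) K := by
    have h1 : Module.finrank (ZMod q) (LinearMap.range φ)
        + Module.finrank (ZMod q) K = ℓ + r := by
      rw [hKdef, LinearMap.finrank_range_add_finrank_ker φ, Module.finrank_fin_fun]
    have h2 : Module.finrank (ZMod q) (LinearMap.range φ) ≤ ℓ :=
      le_of_le_of_eq (Submodule.finrank_le _) hV
    omega
  set k := Module.finrank (ZMod q) K with hkdef
  set N := Fintype.card K with hN
  have hcard : N = q ^ k := by
    rw [hN, Module.card_eq_pow_finrank (K := ZMod q), ZMod.card]
  have hq2 : 2 ≤ q := hq.two_le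
  have hN2 : 2 ≤ N := by
    rw [hcard]
    calc 2 ≤ q := hq2
    _ = q ^ 1 := (pow_one q).symm
    _ ≤ q ^ k := Nat.pow_le_pow_right hq.one_le (le_trans hr hrank)
  -- per-coordinate count
  set c : Fin (ℓ + r) → ℕ := fun i => (Finset.univ.filter fun β : K => β.1 i ≠ 0).card with hc
  have hcount : ∀ i, q * c i + N ≤ q * N := by
    intro i
    have hker : N ≤ q * (Finset.univ.filter fun β : K => β.1 i = 0).card := by
      let e : K →ₗ[ZMod q] ZMod q := (LinearMap.proj i).comp K.subtype
      have h1 : Nat.card K = Nat.card (LinearMap.ker e) * Nat.card (K ⧸ LinearMap.ker e) :=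
        Submodule.card_eq_card_quotient_mul_card _
      have h2 : Nat.card (K ⧸ LinearMap.ker e) ≤ q := by
        calc Nat.card (K ⧸ LinearMap.ker e) = Nat.card (LinearMap.range e) :=
              Nat.card_congr e.quotKerEquivRange.toEquiv
        _ ≤ Nat.card (ZMod q) := Nat.card_le_card_of_injective _ Subtype.val_injective
        _ = q := Nat.card_zmod q
      have h3 : Nat.card (LinearMap.ker e) =
          (Finset.univ.filter fun β : K => β.1 i = 0).card := by
        rw [Nat.card_eq_fintype_card, ← Fintype.card_subtype]
        exact Fintype.card_congr
          (Equiv.subtypeEquivRight (fun β => by simp [e, LinearMap.mem_ker]))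
      calc N = Nat.card K := (Nat.card_eq_fintype_card).symm
      _ = Nat.card (LinearMap.ker e) * Nat.card (K ⧸ LinearMap.ker e) := h1
      _ ≤ Nat.card (LinearMap.ker e) * q := Nat.mul_le_mul_left _ h2
      _ = _ := by rw [h3, mul_comm]
    have hsplit : c i + (Finset.univ.filter fun β : K => β.1 i = 0).card = N := by
      have := Finset.card_filter_add_card_filter_not
        (s := (Finset.univ : Finset K)) (p := fun β : K => β.1 i = 0)
      simp only [Finset.card_univ] at this
      have hceq : (Finset.univ.filter fun β : K => ¬ β.1 i = 0).card = c i := rfl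
      omega
    have h4 : q * c i + q * (Finset.univ.filter fun β : K => β.1 i = 0).card = q * N := by
      rw [← Nat.mul_add, hsplit]
    linarith
  -- weight function
  set wt : K → ℕ := fun β => (Finset.univ.filter fun i => β.1 i ≠ 0).card with hwt
  have hsum : ∑ β : K, wt β = ∑ i, c i := by
    simp only [hwt, hc, Finset.card_filter]
    exact Finset.sum_comm
  -- total bound
  have htot : q * (∑ i, c i) + (ℓ + r) * N ≤ (ℓ + r) * (q * N) := by
    calc q * (∑ i, c i) + (ℓ + r) * N = ∑ i : Fin (ℓ + r), (q * c i + N) := by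
          rw [Finset.sum_add_distrib, ← Finset.mul_sum, Finset.sum_const, Finset.card_univ,
            Fintype.card_fin, smul_eq_mul]
      _ ≤ ∑ _i : Fin (ℓ + r), q * N := Finset.sum_le_sum (fun i _ => hcount i)
      _ = (ℓ + r) * (q * N) := by
          rw [Finset.sum_const, Finset.card_univ, Fintype.card_fin, smul_eq_mul]
  -- a nonzero element of minimal weight
  haveI : Nontrivial K := Fintype.one_lt_card_iff_nontrivial.mp (by omega)
  have hne : (Finset.univ.filter fun β : K => β ≠ 0).Nonempty := by
    obtain ⟨β, hβ⟩ := exists_ne (0 : K)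
    exact ⟨β, Finset.mem_filter.mpr ⟨Finset.mem_univ _, hβ⟩⟩
  obtain ⟨α₀, hα₀mem, hα₀min⟩ := Finset.exists_min_image _ wt hne
  have hα₀ne : α₀ ≠ 0 := (Finset.mem_filter.mp hα₀mem).2
  have hcardT' : (Finset.univ.filter fun β : K => β ≠ 0).card = N - 1 := by
    rw [Finset.filter_ne', Finset.card_erase_of_mem (Finset.mem_univ _), Finset.card_univ]
  have hmin : (N - 1) * wt α₀ ≤ ∑ i, c i := by
    calc (N - 1) * wt α₀
        = (Finset.univ.filter fun β : K => β ≠ 0).card • wt α₀ := by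
          rw [hcardT', smul_eq_mul]
      _ ≤ ∑ β ∈ (Finset.univ.filter fun β : K => β ≠ 0), wt β :=
          Finset.card_nsmul_le_sum _ _ _ (fun x hx => hα₀min x hx)
      _ ≤ ∑ β : K, wt β := Finset.sum_le_sum_of_subset (Finset.filter_subset _ _)
      _ = ∑ i, c i := hsum
  -- combine in ℕ then cast to ℝ
  have hNat : q * ((N - 1) * wt α₀) + (ℓ + r) * N ≤ (ℓ + r) * (q * N) :=
    le_trans (by exact Nat.add_le_add_right (Nat.mul_le_mul_left q hmin) _) htot
  refine ⟨(α₀ : Fin (ℓ + r) → ZMod q), ?_, ?_, ?_⟩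
  · intro h0
    exact hα₀ne (Subtype.ext h0)
  · have hker : φ (α₀ : Fin (ℓ + r) → ZMod q) = 0 := α₀.2
    have : ((φ (α₀ : Fin (ℓ + r) → ZMod q) : V) : Fin n → ZMod q) = 0 := by
      rw [hker]; rfl
    rw [hφ, Fintype.linearCombination_apply] at this
    rw [← this]
    push_cast
    rfl
  · have hreal : (q : ℝ) * (((N : ℝ) - 1) * (wt α₀ : ℝ)) + ((ℓ : ℝ) + (r : ℝ)) * (N : ℝ)
        ≤ ((ℓ : ℝ) + (r : ℝ)) * ((q : ℝ) * (N : ℝ)) := by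
      have h1N : 1 ≤ N := by omega
      have hcast := (Nat.cast_le (α := ℝ)).mpr hNat
      push_cast [Nat.cast_sub h1N] at hcast
      linarith
    have hB : (q : ℝ) ^ r ≤ (N : ℝ) := by
      rw [hcard]
      push_cast
      exact pow_le_pow_right₀ (by exact_mod_cast hq.one_le) hrank
    have := sparse_dep_aux_real (q : ℝ) ((q : ℝ) ^ r) (N : ℝ) (wt α₀ : ℝ) (ℓ : ℝ) (r : ℝ)
      (by exact_mod_cast hq2)
      (le_self_pow₀ (by exact_mod_cast hq.one_le) (by omega))
      hB (by positivity) (by exact_mod_cast hr) hreal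
    exact this
end

section
/- Let q ≥ 5 be a prime. Every subset A of F_q with |A| ≥ q - log_4(q+2) contains an arithmetic progression of length (q+1)/2. -/
open Fin.NatCast in
/-- Box index used in the pigeonhole argument. -/
def levBox (q w : ℕ) (bs : ZMod q) (d : ℕ) (c : ZMod q) : Fin 4 :=
  ((((d : ZMod q) * (c - bs)).val - 1) / w : ℕ)

/-- Lev: every subset of `F_q` (q ≥ 5 prime) missing at most `log_4 (q+2)`
elements contains an arithmetic progression of length `(q+1)/2`. -/
theorem lev_long_ap (q : ℕ) (hq : q.Prime) (hq5 : 5 ≤ q)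
    (A : Finset (ZMod q))
    (hA : (q : ℝ) - Real.logb 4 ((q : ℝ) + 2) ≤ (A.card : ℝ)) :
    ∃ x y : ZMod q, y ≠ 0 ∧ ∀ i : ℕ, i < (q + 1) / 2 → x + (i : ZMod q) * y ∈ A := by
  haveI : Fact q.Prime := ⟨hq⟩
  haveI : NeZero q := ⟨hq.ne_zero⟩
  have hodd : q % 2 = 1 := Nat.odd_iff.mp (hq.odd_of_ne_two (by omega))
  have hcard : A.card + Aᶜ.card = q := by
    rw [Finset.card_add_card_compl, ZMod.card]
  set B := Aᶜ with hBdef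
  set m := B.card with hmdef
  have hmem : ∀ z : ZMod q, z ∉ A → z ∈ B := fun z hz => Finset.mem_compl.mpr hz
  have h4m : 4 ^ m ≤ q + 2 := by
    have hmlog : (m : ℝ) ≤ Real.logb 4 ((q : ℝ) + 2) := by
      have hc : (A.card : ℝ) + (m : ℝ) = (q : ℝ) := by exact_mod_cast hcard
      linarith
    have hpos : (0 : ℝ) < (q : ℝ) + 2 := by positivity
    have h1 : (4 : ℝ) ^ m ≤ (q : ℝ) + 2 := by
      rw [← Real.rpow_natCast (4 : ℝ) m]
      calc (4 : ℝ) ^ (m : ℝ) ≤ (4 : ℝ) ^ Real.logb 4 ((q : ℝ) + 2) :=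
            Real.rpow_le_rpow_of_exponent_le (by norm_num) hmlog
        _ = (q : ℝ) + 2 := Real.rpow_logb (by norm_num) (by norm_num) hpos
    exact_mod_cast h1
  rcases B.eq_empty_or_nonempty with hBe | ⟨bs, hbs⟩
  · refine ⟨0, 1, one_ne_zero, fun i _ => ?_⟩
    by_contra h
    have hzB := hmem _ h
    rw [hBe] at hzB
    exact absurd hzB (Finset.notMem_empty _)
  · have hm1 : 1 ≤ m := Finset.card_pos.mpr ⟨bs, hbs⟩
    set w := (q + 2) / 4 with hwdef
    have hw1 : 1 ≤ w := by omega
    have hw4 : q - 1 ≤ 4 * w := by omega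
    have hw2 : 2 * w ≤ (q + 1) / 2 := by omega
    set C := B.erase bs with hCdef
    have hCcard : C.card = m - 1 := by rw [hCdef, Finset.card_erase_of_mem hbs]
    have hEz : ∀ e : ℕ, 1 ≤ e → e ≤ q - 1 → ((e : ℕ) : ZMod q) ≠ 0 := by
      intro e h1 h2 h0
      have hdvd := (CharP.cast_eq_zero_iff (ZMod q) q e).mp h0
      have := Nat.le_of_dvd (by omega) hdvd
      omega
    have hpig : ∃ a ∈ Finset.Icc 1 (q - 1), ∃ b ∈ Finset.Icc 1 (q - 1), a ≠ b ∧
        (fun d (c : ↥C) => levBox q w bs d ↑c) a = (fun d (c : ↥C) => levBox q w bs d ↑c) b := by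
      apply Finset.exists_ne_map_eq_of_card_lt_of_maps_to
        (t := (Finset.univ : Finset (↥C → Fin 4)))
      · rw [Nat.card_Icc, Finset.card_univ, Fintype.card_fun, Fintype.card_fin,
          Fintype.card_coe, hCcard]
        have hpow : 4 ^ m = 4 * 4 ^ (m - 1) := by
          conv_lhs => rw [show m = (m - 1) + 1 by omega]
          ring
        omega
      · intro a _; exact Finset.mem_univ _
    obtain ⟨a1, ha1, a2, ha2, hane, hafeq⟩ := hpig
    obtain ⟨e1, he1, e2, he2, helt, hfeq⟩ :
        ∃ e1, e1 ∈ Finset.Icc 1 (q - 1) ∧ ∃ e2, e2 ∈ Finset.Icc 1 (q - 1) ∧ e1 < e2 ∧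
          (fun d (c : ↥C) => levBox q w bs d ↑c) e1 = (fun d (c : ↥C) => levBox q w bs d ↑c) e2 := by
      rcases lt_or_gt_of_ne hane with h | h
      · exact ⟨a1, ha1, a2, ha2, h, hafeq⟩
      · exact ⟨a2, ha2, a1, ha1, h, hafeq.symm⟩
    simp only [Finset.mem_Icc] at he1 he2
    set δ := e2 - e1 with hδdef
    have hδ0 : ((δ : ℕ) : ZMod q) ≠ 0 := hEz δ (by omega) (by omega)
    refine ⟨bs + (w : ZMod q) * ((δ : ℕ) : ZMod q)⁻¹, ((δ : ℕ) : ZMod q)⁻¹, inv_ne_zero hδ0, ?_⟩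
    intro i hi
    by_contra hnA
    have hbB : bs + (w : ZMod q) * ((δ : ℕ) : ZMod q)⁻¹ + (i : ZMod q) * ((δ : ℕ) : ZMod q)⁻¹ ∈ B :=
      hmem _ hnA
    set b := bs + (w : ZMod q) * ((δ : ℕ) : ZMod q)⁻¹ + (i : ZMod q) * ((δ : ℕ) : ZMod q)⁻¹
      with hbdef
    have hinv : ((δ : ℕ) : ZMod q) * ((δ : ℕ) : ZMod q)⁻¹ = 1 := mul_inv_cancel₀ hδ0
    have key : ((δ : ℕ) : ZMod q) * (b - bs) = ((w : ℕ) : ZMod q) + ((i : ℕ) : ZMod q) := by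
      rw [hbdef]
      linear_combination (((w : ℕ) : ZMod q) + ((i : ℕ) : ZMod q)) * hinv
    by_cases hbbs : b = bs
    · rw [hbbs, sub_self, mul_zero] at key
      have hzero : ((w + i : ℕ) : ZMod q) = 0 := by push_cast; linear_combination -key
      have hdvd : q ∣ (w + i) := (CharP.cast_eq_zero_iff (ZMod q) q _).mp hzero
      have := Nat.le_of_dvd (by omega) hdvd
      omega
    · have hbC : b ∈ C := Finset.mem_erase.mpr ⟨hbbs, hbB⟩
      have hc0 : b - bs ≠ 0 := sub_ne_zero.mpr hbbs
      have he1z : ((e1 : ℕ) : ZMod q) ≠ 0 := hEz e1 he1.1 he1.2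
      have he2z : ((e2 : ℕ) : ZMod q) ≠ 0 := hEz e2 he2.1 he2.2
      have hprod1 : ((e1 : ℕ) : ZMod q) * (b - bs) ≠ 0 := mul_ne_zero he1z hc0
      have hprod2 : ((e2 : ℕ) : ZMod q) * (b - bs) ≠ 0 := mul_ne_zero he2z hc0
      have h : levBox q w bs e1 b = levBox q w bs e2 b := congrFun hfeq ⟨b, hbC⟩
      unfold levBox at h
      set v1 := (((e1 : ℕ) : ZMod q) * (b - bs)).val with hv1def
      set v2 := (((e2 : ℕ) : ZMod q) * (b - bs)).val with hv2def
      have hv1lt : v1 < q := ZMod.val_lt _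
      have hv2lt : v2 < q := ZMod.val_lt _
      have hv1pos : 1 ≤ v1 :=
        Nat.one_le_iff_ne_zero.mpr (fun h0 => hprod1 ((ZMod.val_eq_zero _).mp h0))
      have hv2pos : 1 ≤ v2 :=
        Nat.one_le_iff_ne_zero.mpr (fun h0 => hprod2 ((ZMod.val_eq_zero _).mp h0))
      have hd1 : (v1 - 1) / w < 4 := (Nat.div_lt_iff_lt_mul (by omega)).mpr (by omega)
      have hd2 : (v2 - 1) / w < 4 := (Nat.div_lt_iff_lt_mul (by omega)).mpr (by omega)
      have hbox : (v1 - 1) / w = (v2 - 1) / w := by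
        have h' := congrArg Fin.val h
        rwa [Fin.val_cast_of_lt hd1, Fin.val_cast_of_lt hd2] at h'
      have hm1' : w * ((v1 - 1) / w) + (v1 - 1) % w = v1 - 1 := Nat.div_add_mod _ _
      have hm2' : w * ((v2 - 1) / w) + (v2 - 1) % w = v2 - 1 := Nat.div_add_mod _ _
      rw [← hbox] at hm2'
      have hr1 : (v1 - 1) % w < w := Nat.mod_lt _ (by omega)
      have hr2 : (v2 - 1) % w < w := Nat.mod_lt _ (by omega)
      have hclose : v1 ≤ v2 + w - 1 ∧ v2 ≤ v1 + w - 1 := by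
        generalize hu : w * ((v1 - 1) / w) = u at hm1' hm2'
        omega
      have hcv1 : ((v1 : ℕ) : ZMod q) = ((e1 : ℕ) : ZMod q) * (b - bs) := by
        rw [hv1def, ZMod.natCast_val, ZMod.cast_id]
      have hcv2 : ((v2 : ℕ) : ZMod q) = ((e2 : ℕ) : ZMod q) * (b - bs) := by
        rw [hv2def, ZMod.natCast_val, ZMod.cast_id]
      have hcastδ : ((δ : ℕ) : ZMod q) = ((e2 : ℕ) : ZMod q) - ((e1 : ℕ) : ZMod q) := by
        rw [hδdef, Nat.cast_sub (le_of_lt helt)]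
      rw [hcastδ] at key
      have hkey2 : ((w : ℕ) : ZMod q) + ((i : ℕ) : ZMod q) + ((v1 : ℕ) : ZMod q)
          = ((v2 : ℕ) : ZMod q) := by
        rw [hcv1, hcv2]
        linear_combination -key
      rcases le_or_gt v1 v2 with hle | hlt2
      · have hsub : ((v2 - v1 : ℕ) : ZMod q) = ((w + i : ℕ) : ZMod q) := by
          rw [Nat.cast_sub hle]
          push_cast
          linear_combination -hkey2
        have h1 := congrArg ZMod.val hsub
        rw [ZMod.val_cast_of_lt (by omega), ZMod.val_cast_of_lt (by omega)] at h1
        omega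
      · have hzero : ((w + i + (v1 - v2) : ℕ) : ZMod q) = 0 := by
          push_cast [Nat.cast_sub hlt2.le]
          linear_combination hkey2
        have hdvd : q ∣ (w + i + (v1 - v2)) := (CharP.cast_eq_zero_iff (ZMod q) q _).mp hzero
        have := Nat.le_of_dvd (by omega) hdvd
        omega
end

section
/- Let q ≥ 3 be a prime and A ⊆ F_q with c := |F_q \ A| satisfying 2 ≤ c < q. Then there exist x, z ∈ F_q with x ≠ 0, z ∈ A, and z - x ∉ A, z + x ∉ A. -/
/-- If `2 ≤ |F_q \ A| < q` then there is an antipodal hole: `z ∈ A` with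
`z - x, z + x ∉ A` for some `x ≠ 0`. -/
theorem antipodal_hole (q : ℕ) [NeZero q] (hq : q.Prime) (hq3 : 3 ≤ q)
    (A : Finset (ZMod q)) (h2 : 2 ≤ Aᶜ.card) (hlt : Aᶜ.card < q) :
    ∃ x z : ZMod q, x ≠ 0 ∧ z ∈ A ∧ z - x ∉ A ∧ z + x ∉ A := by
  haveI : Fact q.Prime := ⟨hq⟩
  by_contra hcon
  push_neg at hcon
  have h2ne : (2 : ZMod q) ≠ 0 := by
    have h : ((2 : ℕ) : ZMod q) ≠ 0 := by
      rw [Ne, ZMod.natCast_eq_zero_iff]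
      intro hdvd
      have := Nat.le_of_dvd (by norm_num) hdvd
      omega
    simpa using h
  have mid : ∀ u v : ZMod q, u ∉ A → v ∉ A → (u + v) / 2 ∉ A := by
    intro u v hu hv hm
    by_cases huv : u = v
    · subst huv
      have : (u + u) / 2 = u := by field_simp; ring
      rw [this] at hm; exact hu hm
    · have hx : (v - u) / 2 ≠ 0 := by
        intro h
        rcases div_eq_zero_iff.mp h with h' | h'
        · exact huv (sub_eq_zero.mp h').symm
        · exact h2ne h'
      have e1 : (u + v) / 2 - (v - u) / 2 = u := by field_simp; ring
      have e2 : (u + v) / 2 + (v - u) / 2 = v := by field_simp; ring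
      have := hcon ((v - u) / 2) ((u + v) / 2) hx hm (by rw [e1]; exact hu)
      rw [e2] at this
      exact hv this
  obtain ⟨b₀, hb₀, b₁, hb₁, hne⟩ := Finset.one_lt_card.mp (by omega : 1 < Aᶜ.card)
  rw [Finset.mem_compl] at hb₀ hb₁
  have hd : b₁ - b₀ ≠ 0 := sub_ne_zero.mpr (Ne.symm hne)
  have hpow : ∀ n : ℕ, (2 : ZMod q) ^ n ≠ 0 := fun n => pow_ne_zero _ h2ne
  have key : ∀ n : ℕ, ∀ a : ℕ, a ≤ 2 ^ n →
      b₀ + (a : ZMod q) / 2 ^ n * (b₁ - b₀) ∉ A := by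
    intro n
    induction n with
    | zero =>
      intro a ha
      interval_cases a
      · simpa using hb₀
      · have : b₀ + ((1 : ℕ) : ZMod q) / 2 ^ 0 * (b₁ - b₀) = b₁ := by
          push_cast; ring
        rw [this]; exact hb₁
    | succ n ih =>
      intro a ha
      have hpn := hpow n
      set i := min a (2 ^ n) with hi_def
      set j := a - i with hj_def
      have hi : i ≤ 2 ^ n := min_le_right _ _
      have hj : j ≤ 2 ^ n := by
        have : 2 ^ (n + 1) = 2 ^ n + 2 ^ n := by ring
        omega
      have hij : i + j = a := by omega
      have h1 := ih i hi
      have h2 := ih j hj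
      have hm := mid _ _ h1 h2
      have heq : b₀ + (a : ZMod q) / 2 ^ (n + 1) * (b₁ - b₀) =
          ((b₀ + (i : ZMod q) / 2 ^ n * (b₁ - b₀)) +
           (b₀ + (j : ZMod q) / 2 ^ n * (b₁ - b₀))) / 2 := by
        have hca : (a : ZMod q) = (i : ZMod q) + (j : ZMod q) := by
          rw [← hij]; push_cast; ring
        rw [hca]
        field_simp
        ring
      rw [heq]
      exact hm
  have all : ∀ w : ZMod q, w ∉ A := by
    intro w
    set t := (w - b₀) / (b₁ - b₀) with ht
    set a := (t * 2 ^ q).val with ha_def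
    have haq : a < q := ZMod.val_lt _
    have hq2 : q < 2 ^ q := Nat.lt_two_pow_self
    have hacast : (a : ZMod q) = t * 2 ^ q := by
      rw [ha_def]; exact ZMod.natCast_val _ |>.trans (ZMod.cast_id _ _)
    have h := key q a (by omega)
    have hw : b₀ + (a : ZMod q) / 2 ^ q * (b₁ - b₀) = w := by
      rw [hacast, ht]
      field_simp
      ring
    rw [hw] at h
    exact h
  have huniv : Aᶜ = Finset.univ := by
    ext w
    simp [all w]
  rw [huniv, Finset.card_univ, ZMod.card] at hlt
  omega
end

section
/- Let q ≥ 3 be a prime and A ⊆ F_q with c := |F_q \ A| satisfying 2 ≤ c < (q+1)/2. Then there exist x, y, z ∈ F_q with x ≠ 0, y ≠ 0, z ∈ A, z - x ∉ A, z + x ∉ A, and z - y ∈ A, z + y ∈ A. -/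
open scoped Pointwise


/-- If `2 ≤ |F_q \ A| < (q+1)/2` then there is an antipodal hole `z ± x ∉ A`,
`z ∈ A`, together with `y ≠ 0` such that `z - y, z + y ∈ A`. -/
theorem antipodal_hole_with_pair (q : ℕ) [NeZero q] (hq : q.Prime) (hq3 : 3 ≤ q)
    (A : Finset (ZMod q)) (h2 : 2 ≤ Aᶜ.card) (hlt : Aᶜ.card < (q + 1) / 2) :
    ∃ x y z : ZMod q, x ≠ 0 ∧ y ≠ 0 ∧ z ∈ A ∧ z - x ∉ A ∧ z + x ∉ A ∧
      z - y ∈ A ∧ z + y ∈ A := by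
  classical
  haveI : Fact q.Prime := ⟨hq⟩
  have hodd : Odd q := hq.odd_of_ne_two (by omega)
  set B := Aᶜ with hB
  set c := B.card with hc
  -- 2c ≤ q - 1
  have h2c : 2 * c ≤ q - 1 := by
    obtain ⟨k, hk⟩ := hodd
    omega
  have h2ne : (2 : ZMod q) ≠ 0 := by
    intro h
    have hdvd : (q : ℕ) ∣ 2 := (ZMod.natCast_eq_zero_iff 2 q).mp (by push_cast; exact h)
    have := Nat.le_of_dvd (by norm_num) hdvd
    omega
  have hinvne : (2 : ZMod q)⁻¹ ≠ 0 := inv_ne_zero h2ne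
  have hBne : B.Nonempty := Finset.card_pos.mp (by omega)
  have hCD := ZMod.cauchy_davenport hq hBne hBne
  -- midpoint set
  set M := (B + B).image (fun s => s * (2 : ZMod q)⁻¹) with hM
  have hMcard : M.card = (B + B).card :=
    Finset.card_image_of_injective _ (mul_left_injective₀ hinvne)
  have hMc : c < M.card := by
    rw [hMcard]
    have : min q (c + c - 1) = c + c - 1 := by omega
    omega
  have hdiff : (M \ B).Nonempty := by
    apply Finset.card_pos.mp
    have hle : M.card ≤ (M \ B).card + B.card := by
      have := Finset.card_sdiff_add_card M B
      have := Finset.card_le_card (Finset.subset_union_left (s₁ := M) (s₂ := B))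
      omega
    omega
  obtain ⟨z, hz⟩ := hdiff
  rw [Finset.mem_sdiff] at hz
  obtain ⟨hzM, hzB⟩ := hz
  have hzA : z ∈ A := by
    by_contra h
    exact hzB (Finset.mem_compl.mpr h)
  rw [hM, Finset.mem_image] at hzM
  obtain ⟨s, hsBB, hsz⟩ := hzM
  rw [Finset.mem_add] at hsBB
  obtain ⟨b₁, hb₁, b₂, hb₂, hs⟩ := hsBB
  have h2z : z * 2 = b₁ + b₂ := by
    rw [← hsz, ← hs]
    field_simp
  set x := b₁ - z with hx
  have hzx1 : z + x = b₁ := by ring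
  have hzx2 : z - x = b₂ := by
    have : z - x = z * 2 - b₁ := by ring
    rw [this, h2z]; ring
  have hxne : x ≠ 0 := by
    intro h
    apply hzB
    have : z = b₁ := by rw [hx] at h; linear_combination -h
    rwa [this]
  -- now find y
  by_contra hcon
  push_neg at hcon
  have hkey : ∀ y : ZMod q, y ≠ 0 → z + y ∈ B ∨ z + (-y) ∈ B := by
    intro y hy
    by_contra h
    push_neg at h
    have h1 : z + y ∈ A := by
      by_contra h'; exact h.1 (Finset.mem_compl.mpr h')
    have h2 : z - y ∈ A := by
      by_contra h'
      apply h.2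
      rw [← sub_eq_add_neg]
      exact Finset.mem_compl.mpr h'
    exact (hcon x y z hxne hy hzA (by rw [hzx2]; exact Finset.mem_compl.mp hb₂)
      (by rw [hzx1]; exact Finset.mem_compl.mp hb₁) h2 h1).elim
  set T := Finset.univ.filter (fun y : ZMod q => y ≠ 0 ∧ z + y ∈ B) with hT
  set S := T.image Neg.neg with hS
  have hTcard : T.card ≤ c := by
    apply Finset.card_le_card_of_injOn (fun y => z + y)
    · intro y hy
      rw [Finset.mem_coe, hT, Finset.mem_filter] at hy
      exact hy.2.2
    · intro a _ b _ hab
      exact add_left_cancel hab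
  have hScard : S.card = T.card := Finset.card_image_of_injective _ neg_injective
  have hsub : (Finset.univ \ {0} : Finset (ZMod q)) ⊆ T ∪ S := by
    intro y hy
    rw [Finset.mem_sdiff, Finset.mem_singleton] at hy
    have hy0 : y ≠ 0 := hy.2
    rcases hkey y hy0 with h | h
    · exact Finset.mem_union_left _ (by rw [hT]; simp [hy0, h])
    · apply Finset.mem_union_right
      rw [hS, Finset.mem_image]
      exact ⟨-y, by rw [hT]; simp [hy0, h], by simp⟩
  have hxT : x ∈ T := by
    rw [hT]; simp only [Finset.mem_filter, Finset.mem_univ, true_and]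
    exact ⟨hxne, by rw [hzx1]; exact hb₁⟩
  have hnxT : -x ∈ T := by
    rw [hT]; simp only [Finset.mem_filter, Finset.mem_univ, true_and]
    refine ⟨neg_ne_zero.mpr hxne, ?_⟩
    rw [← sub_eq_add_neg, hzx2]; exact hb₂
  have hxS : x ∈ S := by
    rw [hS, Finset.mem_image]; exact ⟨-x, hnxT, by simp⟩
  have hnxS : -x ∈ S := by
    rw [hS, Finset.mem_image]; exact ⟨x, hxT, rfl⟩
  have hxnx : x ≠ -x := by
    intro h
    apply hxne
    have h2x : x * 2 = 0 := by linear_combination h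
    rcases mul_eq_zero.mp h2x with h' | h'
    · exact h'
    · exact absurd h' h2ne
  have hinter : 2 ≤ (T ∩ S).card := by
    have hsub2 : ({x, -x} : Finset (ZMod q)) ⊆ T ∩ S := by
      intro w hw
      rw [Finset.mem_insert, Finset.mem_singleton] at hw
      rcases hw with rfl | rfl
      · exact Finset.mem_inter.mpr ⟨hxT, hxS⟩
      · exact Finset.mem_inter.mpr ⟨hnxT, hnxS⟩
    have : ({x, -x} : Finset (ZMod q)).card = 2 := by
      rw [Finset.card_insert_of_notMem (by simpa using hxnx)]; simp
    calc 2 = ({x, -x} : Finset (ZMod q)).card := this.symm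
      _ ≤ _ := Finset.card_le_card hsub2
  have hunion : (T ∪ S).card + (T ∩ S).card = T.card + S.card :=
    Finset.card_union_add_card_inter T S
  have hbig : q - 1 ≤ (T ∪ S).card := by
    have := Finset.card_le_card hsub
    have hcd : (Finset.univ \ {0} : Finset (ZMod q)).card = q - 1 := by
      rw [Finset.card_sdiff_of_subset (by simp)]
      simp [ZMod.card]
    omega
  omega
end

section
/- Let q ≥ 11 be a prime and A ⊆ F_q with |F_q \ A| = (q+1)/2. Then A contains a nontrivial 3-term arithmetic progression, i.e., there exist a ∈ F_q and d ∈ F_q with d ≠ 0 such that a, a+d, a+2d ∈ A. -/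
open Polynomial Finset


lemma basis_coeff {F : Type*} [Field F] [DecidableEq F] (T : Finset F) (a : F) (ha : a ∈ T) :
    (Lagrange.basis T id a).coeff (T.card - 1) = Lagrange.nodalWeight T id a := by
  rw [Lagrange.basis_eq_prod_sub_inv_mul_nodal_div ha, ← Lagrange.nodal_erase_eq_nodal_div ha,
    Polynomial.coeff_C_mul]
  have hm : (Lagrange.nodal (T.erase a) id).Monic := Lagrange.nodal_monic
  have hd : (Lagrange.nodal (T.erase a) id).natDegree = T.card - 1 := by
    rw [Lagrange.natDegree_nodal, card_erase_of_mem ha]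
  rw [← hd, hm.coeff_natDegree, mul_one]

lemma key_sum {F : Type*} [Field F] [DecidableEq F] (T : Finset F) (i : ℕ) (hi : i < T.card) :
    ∑ a ∈ T, Lagrange.nodalWeight T id a * a ^ i = if i = T.card - 1 then 1 else 0 := by
  have hinj : Set.InjOn id (T : Set F) := fun x _ y _ h => h
  have hdeg : (Polynomial.X ^ i : F[X]).degree < T.card := by
    simpa [Polynomial.degree_X_pow] using (by exact_mod_cast hi : (i : WithBot ℕ) < T.card)
  have hrepr := Lagrange.eq_interpolate hinj hdeg
  have h2 := congrArg (fun p => p.coeff (T.card - 1)) hrepr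
  simp only [Lagrange.interpolate_apply, Polynomial.finset_sum_coeff, Polynomial.coeff_smul,
    Polynomial.coeff_X_pow, Polynomial.eval_pow, Polynomial.eval_X, id_eq, smul_eq_mul] at h2
  rw [Finset.sum_congr rfl
      (fun a ha => by rw [Polynomial.coeff_C_mul, basis_coeff T a ha, mul_comm])] at h2
  rw [← h2]
  simp only [eq_comm (a := T.card - 1) (b := i)]

lemma main_contra {F : Type*} [Field F] [DecidableEq F] (k : ℕ) (hk : 5 ≤ k)
    (A B S' : Finset F) (hAc : A.card = k) (hBc : B.card = k - 1)
    (hS'c : S'.card = 2 * k - 4)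
    (hvan : ∀ a ∈ A, ∀ b ∈ B, a ≠ b → a + b ∈ S') :
    (((2 * k - 4).choose (k - 2) : ℕ) : F) = (((2 * k - 4).choose (k - 1) : ℕ) : F) := by
  set m := 2 * k - 4 with hm
  set wA : F → F := Lagrange.nodalWeight A id with hwA
  set wB : F → F := Lagrange.nodalWeight B id with hwB
  set P : ℕ → F := fun i => ∑ a ∈ A, wA a * a ^ i with hPdef
  set Q : ℕ → F := fun j => ∑ b ∈ B, wB b * b ^ j with hQdef
  have hP0 : ∀ i, i ≤ k - 2 → P i = 0 := by
    intro i hi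
    rw [hPdef]
    simpa using (by
      rw [key_sum A i (by omega : i < A.card), hAc, if_neg (by omega)] :
      ∑ a ∈ A, Lagrange.nodalWeight A id a * a ^ i = 0)
  have hP1 : P (k - 1) = 1 := by
    rw [hPdef]
    simpa using (by
      rw [key_sum A (k - 1) (by omega : k - 1 < A.card), hAc, if_pos rfl] :
      ∑ a ∈ A, Lagrange.nodalWeight A id a * a ^ (k - 1) = 1)
  have hQ0 : ∀ j, j ≤ k - 3 → Q j = 0 := by
    intro j hj
    rw [hQdef]
    simpa using (by
      rw [key_sum B j (by omega : j < B.card), hBc, if_neg (by omega)] :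
      ∑ b ∈ B, Lagrange.nodalWeight B id b * b ^ j = 0)
  have hQ1 : Q (k - 2) = 1 := by
    rw [hQdef]
    simpa using (by
      rw [key_sum B (k - 2) (by omega : k - 2 < B.card), hBc, if_pos (by omega)] :
      ∑ b ∈ B, Lagrange.nodalWeight B id b * b ^ (k - 2) = 1)
  have hPQ : ∀ i j : ℕ, i + j ≤ 2 * k - 3 →
      P i * Q j = if i = k - 1 ∧ j = k - 2 then 1 else 0 := by
    intro i j hij
    by_cases hi : i ≤ k - 2
    · rw [hP0 i hi, zero_mul, if_neg (by omega)]
    · by_cases hj : j = k - 2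
      · have hi' : i = k - 1 := by omega
        rw [hi', hj, hP1, hQ1, if_pos ⟨rfl, rfl⟩, one_mul]
      · rw [hQ0 j (by omega), mul_zero, if_neg (by omega)]
  set g : F[X] := Lagrange.nodal S' id with hg
  have hgm : g.Monic := Lagrange.nodal_monic
  have hgd : g.natDegree = m := by rw [hg, Lagrange.natDegree_nodal, hS'c]
  have hcm : g.coeff m = 1 := by rw [← hgd]; exact hgm.coeff_natDegree
  have heval : ∀ x : F, g.eval x = ∑ r ∈ range (m + 1), g.coeff r * x ^ r := by
    intro x
    rw [Polynomial.eval_eq_sum_range, hgd]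
  set D : F := ∑ a ∈ A, ∑ b ∈ B, wA a * wB b * ((a - b) * g.eval (a + b)) with hD
  have hDzero : D = 0 := by
    rw [hD]
    refine Finset.sum_eq_zero fun a ha => Finset.sum_eq_zero fun b hb => ?_
    by_cases hab : a = b
    · simp [hab]
    · have : g.eval (a + b) = 0 := by
        simpa using Lagrange.eval_nodal_at_node (v := (id : F → F)) (hvan a ha b hb hab)
      simp [this]
  have hpoint : ∀ a b : F, wA a * wB b * ((a - b) * g.eval (a + b)) =
      ∑ r ∈ range (m + 1), ∑ u ∈ range (r + 1),
        (g.coeff r * (r.choose u : F)) *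
          (wA a * a ^ (u + 1) * (wB b * b ^ (r - u)) -
            wA a * a ^ u * (wB b * b ^ (r - u + 1))) := by
    intro a b
    rw [heval]
    simp only [Finset.mul_sum]
    refine Finset.sum_congr rfl fun r _ => ?_
    rw [add_pow]
    simp only [Finset.mul_sum]
    refine Finset.sum_congr rfl fun u _ => ?_
    ring
  have hprod : ∀ i j : ℕ,
      (∑ a ∈ A, ∑ b ∈ B, wA a * a ^ i * (wB b * b ^ j)) = P i * Q j := by
    intro i j
    rw [hPdef, hQdef, Finset.sum_mul_sum]
  have hinner : ∀ (K : F) (i j i' j' : ℕ),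
      (∑ a ∈ A, ∑ b ∈ B,
        K * (wA a * a ^ i * (wB b * b ^ j) - wA a * a ^ i' * (wB b * b ^ j'))) =
      K * (P i * Q j - P i' * Q j') := by
    intro K i j i' j'
    rw [← hprod i j, ← hprod i' j']
    simp only [mul_sub, Finset.mul_sum, Finset.sum_sub_distrib]
  have hD2 : D = ∑ r ∈ range (m + 1), ∑ u ∈ range (r + 1),
      (g.coeff r * (r.choose u : F)) *
        (P (u + 1) * Q (r - u) - P u * Q (r - u + 1)) := by
    rw [hD]
    rw [Finset.sum_congr rfl fun a _ => Finset.sum_congr rfl fun b _ => hpoint a b]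
    rw [Finset.sum_congr rfl fun a (_ : a ∈ A) => Finset.sum_comm]
    rw [Finset.sum_comm]
    refine Finset.sum_congr rfl fun r _ => ?_
    rw [Finset.sum_congr rfl fun a (_ : a ∈ A) => Finset.sum_comm]
    rw [Finset.sum_comm]
    refine Finset.sum_congr rfl fun u _ => ?_
    exact hinner _ _ _ _ _
  have hD3 : D = ((m.choose (k - 2) : ℕ) : F) - ((m.choose (k - 1) : ℕ) : F) := by
    rw [hD2, Finset.sum_range_succ]
    have h1 : ∑ r ∈ range m, ∑ u ∈ range (r + 1),
        (g.coeff r * (r.choose u : F)) *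
          (P (u + 1) * Q (r - u) - P u * Q (r - u + 1)) = 0 := by
      refine Finset.sum_eq_zero fun r hr => Finset.sum_eq_zero fun u hu => ?_
      simp only [mem_range] at hr hu
      rw [hPQ (u + 1) (r - u) (by omega), hPQ u (r - u + 1) (by omega),
        if_neg (by omega), if_neg (by omega), sub_zero, mul_zero]
    rw [h1, zero_add]
    have h2 : ∀ u ∈ range (m + 1),
        (g.coeff m * (m.choose u : F)) *
          (P (u + 1) * Q (m - u) - P u * Q (m - u + 1)) =
        (if u = k - 2 then ((m.choose (k - 2) : ℕ) : F) else 0) -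
          (if u = k - 1 then ((m.choose (k - 1) : ℕ) : F) else 0) := by
      intro u hu
      simp only [mem_range] at hu
      rw [hcm, one_mul, hPQ (u + 1) (m - u) (by omega), hPQ u (m - u + 1) (by omega)]
      by_cases h : u = k - 2
      · rw [if_pos (by omega), if_neg (by omega), if_pos h, if_neg (by omega), h]
        ring
      · by_cases h' : u = k - 1
        · rw [if_neg (by omega), if_pos (by omega), if_neg h, if_pos h', h']
          ring
        · rw [if_neg (by omega), if_neg (by omega), if_neg h, if_neg h']
          ring
    rw [Finset.sum_congr rfl h2, Finset.sum_sub_distrib,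
      Finset.sum_ite_eq' (range (m + 1)) (k - 2) (fun _ => ((m.choose (k - 2) : ℕ) : F)),
      Finset.sum_ite_eq' (range (m + 1)) (k - 1) (fun _ => ((m.choose (k - 1) : ℕ) : F)),
      if_pos (by simp only [mem_range]; omega), if_pos (by simp only [mem_range]; omega)]
  have := hD3.symm.trans hDzero
  rw [sub_eq_zero] at this
  exact this


/-- A subset of `F_q` (q ≥ 11 prime) whose complement has size `(q+1)/2`
contains a nontrivial 3-term arithmetic progression. -/
theorem middle_three_ap (q : ℕ) [NeZero q] (hq : q.Prime) (hq11 : 11 ≤ q)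
    (A : Finset (ZMod q)) (hA : Aᶜ.card = (q + 1) / 2) :
    ∃ a d : ZMod q, d ≠ 0 ∧ a ∈ A ∧ a + d ∈ A ∧ a + 2 * d ∈ A := by
  by_contra hcon
  push_neg at hcon
  haveI : Fact q.Prime := ⟨hq⟩
  have hodd : q % 2 = 1 := Nat.odd_iff.mp (hq.odd_of_ne_two (by omega))
  obtain ⟨k, hq2⟩ : ∃ k, q = 2 * k + 1 := ⟨q / 2, by omega⟩
  have hk5 : 5 ≤ k := by omega
  have hAcard : A.card = k := by
    have h1 : Aᶜ.card = Fintype.card (ZMod q) - A.card := Finset.card_compl A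
    have h2 : A.card ≤ Fintype.card (ZMod q) := Finset.card_le_univ A
    rw [ZMod.card q] at h1 h2
    omega
  classical
  set S : Finset (ZMod q) := ((A ×ˢ A).filter fun p => p.1 ≠ p.2).image fun p => p.1 + p.2
    with hS
  set T2 : Finset (ZMod q) := A.image fun y => 2 * y with hT2
  have h2ne : (2 : ZMod q) ≠ 0 := by
    intro h
    have h' : ((2 : ℕ) : ZMod q) = 0 := by exact_mod_cast h
    have := Nat.le_of_dvd (by norm_num) ((ZMod.natCast_eq_zero_iff 2 q).mp h')
    omega
  have hdisj : Disjoint S T2 := by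
    rw [Finset.disjoint_left]
    rintro t htS htT
    rw [hS, Finset.mem_image] at htS
    obtain ⟨p, hp, rfl⟩ := htS
    rw [Finset.mem_filter, Finset.mem_product] at hp
    obtain ⟨⟨hp1, hp2⟩, hpne⟩ := hp
    rw [hT2, Finset.mem_image] at htT
    obtain ⟨y, hy, hyt⟩ := htT
    have hdne : y - p.1 ≠ 0 := by
      intro h0
      have hy1 : y = p.1 := by rwa [sub_eq_zero] at h0
      apply hpne
      have h2' : p.1 + p.2 = 2 * p.1 := by rw [← hyt, hy1]
      linear_combination -h2'
    have h3 : p.1 + (y - p.1) ∈ A := by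
      have : p.1 + (y - p.1) = y := by ring
      rwa [this]
    have h4 : p.1 + 2 * (y - p.1) ∈ A := by
      have : p.1 + 2 * (y - p.1) = p.2 := by linear_combination hyt
      rwa [this]
    exact hcon p.1 (y - p.1) hdne hp1 h3 h4
  have hT2card : T2.card = k := by
    rw [hT2, Finset.card_image_of_injective _ (mul_right_injective₀ h2ne), hAcard]
  have hScard : S.card ≤ k + 1 := by
    have hu := Finset.card_union_of_disjoint hdisj
    have hle : (S ∪ T2).card ≤ q := by
      have := Finset.card_le_univ (S ∪ T2)
      rwa [ZMod.card] at this
    omega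
  obtain ⟨S', hSS', -, hS'card⟩ := Finset.exists_subsuperset_card_eq (Finset.subset_univ S)
      (show S.card ≤ 2 * k - 4 by omega)
      (by rw [Finset.card_univ, ZMod.card]; omega)
  have hAne : A.Nonempty := by rw [← Finset.card_pos, hAcard]; omega
  obtain ⟨a₀, ha₀⟩ := hAne
  set B := A.erase a₀ with hB
  have hBA : B ⊆ A := Finset.erase_subset _ _
  have hBc : B.card = k - 1 := by rw [hB, Finset.card_erase_of_mem ha₀, hAcard]
  have hvan : ∀ a ∈ A, ∀ b ∈ B, a ≠ b → a + b ∈ S' := by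
    intro a ha b hb hab
    apply hSS'
    rw [hS, Finset.mem_image]
    exact ⟨(a, b), by rw [Finset.mem_filter, Finset.mem_product]; exact ⟨⟨ha, hBA hb⟩, hab⟩, rfl⟩
  have hmain := main_contra k hk5 A B S' hAcard hBc hS'card hvan
  set m := 2 * k - 4 with hmdef
  have hid : m.choose (k - 2) * (k - 2) = m.choose (k - 1) * (k - 1) := by
    obtain ⟨k', rfl⟩ : ∃ k', k = k' + 3 := ⟨k - 3, by omega⟩
    have e3 : m = 2 * k' + 2 := by omega
    rw [show k' + 3 - 2 = k' + 1 from by omega, show k' + 3 - 1 = k' + 2 from by omega, e3]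
    have h1 := Nat.choose_succ_right_eq (2 * k' + 2) k'
    rw [show (2 * k' + 2) - k' = k' + 2 from by omega] at h1
    have h3 : (2 * k' + 2).choose k' = (2 * k' + 2).choose (k' + 2) := by
      have := Nat.choose_symm (show k' + 2 ≤ 2 * k' + 2 by omega)
      rwa [show 2 * k' + 2 - (k' + 2) = k' from by omega] at this
    rw [h1, h3]
  have hcast : ((m.choose (k - 2) : ℕ) : ZMod q) * ((k - 2 : ℕ) : ZMod q) =
      ((m.choose (k - 1) : ℕ) : ZMod q) * ((k - 1 : ℕ) : ZMod q) := by
    exact_mod_cast congrArg (fun n : ℕ => (n : ZMod q)) hid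
  rw [hmain] at hcast
  have hstep : ((k - 1 : ℕ) : ZMod q) = ((k - 2 : ℕ) : ZMod q) + 1 := by
    rw [show (k - 1 : ℕ) = (k - 2) + 1 from by omega, Nat.cast_add, Nat.cast_one]
  rw [hstep, mul_add, mul_one] at hcast
  have hczero : ((m.choose (k - 1) : ℕ) : ZMod q) = 0 := left_eq_add.mp hcast
  have hdvd : q ∣ m.choose (k - 1) := (ZMod.natCast_eq_zero_iff _ q).mp hczero
  have hchoosedvd : m.choose (k - 1) ∣ m.factorial := by
    have h := Nat.choose_mul_factorial_mul_factorial (show k - 1 ≤ m by omega)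
    exact ⟨(k - 1).factorial * (m - (k - 1)).factorial, by rw [← h]; ring⟩
  have hqm := (Nat.Prime.dvd_factorial hq).mp (hdvd.trans hchoosedvd)
  omega
end

section
/- Let q ≥ 3 be a prime, and let A ⊆ F_q. Suppose there exist vectors v_1, ..., v_{m'} in F_q^n and disjoint nonempty subsets S_1, ..., S_m of {1,...,m'} with coefficients α_j ∈ {1,2} for j ∈ ∪S_i such that for each i, Σ_{j ∈ S_i} α_j v_j = 0. Suppose further that for the vectors u'_i := Σ_{j ∈ S_i, α_j = 2} v_j (i = 1, ..., m), there exist coefficients ε_i ∈ {-1, 0, 1}, not all zero, with Σ_i ε_i u'_i = 0. If additionally for every i there exist j, j' ∈ S_i with α_j = 1 and α_{j'} = 2, then there exists a nonempty subset T of {1, ..., m'} with Σ_{j ∈ T} v_j = 0. -/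
/-- Combining disjoint `(0,1,2)`-zero-sums with a `(±1)`-zero-sum of the
`α = 2` parts yields a subset-zero-sum of the original vectors. -/
theorem subset_sum_from_012 (q : ℕ) (hq : q.Prime) (hq3 : 3 ≤ q)
    (n m m' : ℕ) (v : Fin m' → Fin n → ZMod q)
    (S : Fin m → Finset (Fin m'))
    (hdisj : ∀ i i' : Fin m, i ≠ i' → Disjoint (S i) (S i'))
    (hne : ∀ i, (S i).Nonempty)
    (α : Fin m' → ZMod q)
    (hα : ∀ i, ∀ j ∈ S i, α j = 1 ∨ α j = 2)
    (hzero : ∀ i, ∑ j ∈ S i, α j • v j = 0)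
    (ε : Fin m → ℤ) (hε : ∀ i, |ε i| ≤ 1) (hεne : ε ≠ 0)
    (hεsum : ∑ i, (ε i : ZMod q) •
        (∑ j ∈ (S i).filter fun j => α j = 2, v j) = 0)
    (hmix : ∀ i, (∃ j ∈ S i, α j = 1) ∧ ∃ j' ∈ S i, α j' = 2) :
    ∃ T : Finset (Fin m'), T.Nonempty ∧ ∑ j ∈ T, v j = 0 := by
  classical
  set f : Fin m → Finset (Fin m') := fun i =>
    if ε i = 1 then (S i).filter (fun j => α j = 2)
    else if ε i = -1 then S i else ∅ with hf
  have hsub : ∀ i, f i ⊆ S i := by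
    intro i; simp only [hf]; split_ifs
    · exact Finset.filter_subset _ _
    · exact Finset.Subset.refl _
    · exact Finset.empty_subset _
  -- key computation for each block
  have key : ∀ i, ∑ j ∈ f i, v j
      = (ε i : ZMod q) • (∑ j ∈ (S i).filter fun j => α j = 2, v j) := by
    intro i
    haveI : Fact (1 < q) := ⟨by omega⟩
    have h12 : (1 : ZMod q) ≠ 2 := by
      intro h
      exact one_ne_zero (by linear_combination -h : (1 : ZMod q) = 0)
    have hfilter : (S i).filter (fun j => ¬ α j = 2) = (S i).filter (fun j => α j = 1) := by
      apply Finset.filter_congr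
      intro j hj
      rcases hα i j hj with h | h <;> simp [h, h12, h12.symm]
    have hsplit : ∑ j ∈ S i, α j • v j
        = (2 : ZMod q) • (∑ j ∈ (S i).filter fun j => α j = 2, v j)
          + ∑ j ∈ (S i).filter (fun j => α j = 1), v j := by
      rw [← Finset.sum_filter_add_sum_filter_not (S i) (fun j => α j = 2), hfilter,
        Finset.smul_sum]
      congr 1
      · exact Finset.sum_congr rfl (by intro j hj; simp at hj; rw [hj.2])
      · exact Finset.sum_congr rfl (by intro j hj; simp at hj; rw [hj.2, one_smul])
    have hz := hzero i
    rw [hsplit] at hz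
    set B := (S i).filter (fun j => α j = 2) with hB
    set sB := ∑ j ∈ B, v j with hsB
    set sA := ∑ j ∈ (S i).filter (fun j => α j = 1), v j with hsA
    have h2 : (2 : ZMod q) • sB = sB + sB := by rw [two_smul]
    have hS : ∑ j ∈ S i, v j = sB + sA := by
      rw [← Finset.sum_filter_add_sum_filter_not (S i) (fun j => α j = 2), hfilter]
    have hneg : sB + sA = -sB := by
      have : sB + (sB + sA) = 0 := by rw [← add_assoc, ← h2]; exact hz
      linear_combination this
    rcases abs_le.mp (hε i) with ⟨hl, hr⟩
    simp only [hf]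
    rcases (by omega : ε i = 1 ∨ ε i = 0 ∨ ε i = -1) with h | h | h <;>
      simp [h, hS, hneg] <;> exact hsB.symm
  refine ⟨Finset.univ.biUnion f, ?_, ?_⟩
  · obtain ⟨i0, hi0⟩ : ∃ i, ε i ≠ 0 := by
      by_contra h; push_neg at h; exact hεne (funext h)
    have hfne : (f i0).Nonempty := by
      simp only [hf]
      rcases abs_le.mp (hε i0) with ⟨hl, hr⟩
      rcases (by omega : ε i0 = 1 ∨ ε i0 = -1) with h | h
      · obtain ⟨j, hj, hj2⟩ := (hmix i0).2
        exact ⟨j, by simp [h, Finset.mem_filter, hj, hj2]⟩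
      · obtain ⟨j, hj⟩ := hne i0
        refine ⟨j, ?_⟩
        rw [if_neg (by omega), if_pos h]
        exact hj
    obtain ⟨j, hj⟩ := hfne
    exact ⟨j, Finset.mem_biUnion.mpr ⟨i0, Finset.mem_univ _, hj⟩⟩
  · rw [Finset.sum_biUnion]
    · rw [← hεsum]
      exact Finset.sum_congr rfl fun i _ => key i
    · intro i _ i' _ hii'
      exact (hdisj i i' hii').mono (hsub i) (hsub i')
end

section
/- Let q be a prime and let β_1, ..., β_d be independent uniformly random elements of F_q. Then the probability that no nonempty subset T ⊆ {1,...,d} satisfies Σ_{j∈T} β_j = 1 is at most (q-1)/(2^d - 1). -/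
open Finset Function

section Counting

variable {q d : ℕ} [NeZero q]

/-- Shifting the `j0`-coordinate. -/
lemma card_shift (j0 : Fin d) (f : (Fin d → ZMod q) → ZMod q)
    (hf : ∀ β x, f (update β j0 x) = f β)
    (P : (Fin d → ZMod q) → Prop) [DecidablePred P]
    (hP : ∀ β x, P (update β j0 x) ↔ P β) :
    (univ.filter fun β => β j0 = f β ∧ P β).card
      = (univ.filter fun β => β j0 = 0 ∧ P β).card := by
  symm
  apply Finset.card_bij (i := fun β _ => update β j0 (f β))
  · intro β hβ
    simp only [mem_filter, mem_univ, true_and] at hβ ⊢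
    refine ⟨?_, (hP β (f β)).2 hβ.2⟩
    rw [update_self, hf]
  · intro a ha b hb hab
    simp only [mem_filter, mem_univ, true_and] at ha hb
    funext j
    by_cases hj : j = j0
    · subst hj; rw [ha.1, hb.1]
    · have := congrFun hab j
      rwa [update_of_ne hj, update_of_ne hj] at this
  · intro γ hγ
    simp only [mem_filter, mem_univ, true_and] at hγ
    refine ⟨update γ j0 0, ?_, ?_⟩
    · simp only [mem_filter, mem_univ, true_and]
      exact ⟨update_self _ _ _, (hP γ 0).2 hγ.2⟩
    · rw [hf, update_idem, ← hγ.1, update_eq_self]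

lemma card_mul_q (j0 : Fin d) (P : (Fin d → ZMod q) → Prop) [DecidablePred P]
    (hP : ∀ β x, P (update β j0 x) ↔ P β) :
    (univ.filter fun β : Fin d → ZMod q => β j0 = 0 ∧ P β).card * q
      = (univ.filter P).card := by
  classical
  have h1 : (univ.filter P).card
      = ∑ c : ZMod q, ((univ.filter P).filter fun β => β j0 = c).card :=
    Finset.card_eq_sum_card_fiberwise (fun x _ => mem_univ _)
  have h2 : ∀ c : ZMod q, ((univ.filter P).filter fun β => β j0 = c).card
      = (univ.filter fun β : Fin d → ZMod q => β j0 = 0 ∧ P β).card := by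
    intro c
    rw [filter_filter]
    have h := card_shift j0 (fun _ => c) (fun _ _ => rfl) P hP
    rw [← h]
    congr 1
    apply Finset.filter_congr
    intro x _
    tauto
  rw [h1]
  rw [Finset.sum_congr rfl (fun c _ => h2 c), Finset.sum_const, card_univ, ZMod.card,
    smul_eq_mul, mul_comm]

lemma card_eval_zero (j0 : Fin d) :
    (univ.filter fun β : Fin d → ZMod q => β j0 = 0).card * q = q ^ d := by
  classical
  have h := card_mul_q (q := q) j0 (fun _ => True) (fun _ _ => Iff.rfl)
  have h2 : (univ.filter fun β : Fin d → ZMod q => β j0 = 0 ∧ True)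
      = (univ.filter fun β : Fin d → ZMod q => β j0 = 0) := by
    apply Finset.filter_congr; intro x _; simp
  have h3 : (univ.filter fun _ : Fin d → ZMod q => True) = univ := by
    apply Finset.filter_true_of_mem; intro x _; trivial
  rw [h2, h3, card_univ] at h
  rw [h, Fintype.card_fun, ZMod.card, Fintype.card_fin]

/-- Number of `β` with `∑_{j ∈ T} β j = c` for a nonempty `T` is `q^(d-1)`. -/
lemma count_one (T : Finset (Fin d)) (hT : T.Nonempty) (c : ZMod q) :
    (univ.filter fun β : Fin d → ZMod q => ∑ j ∈ T, β j = c).card = q ^ (d - 1) := by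
  classical
  obtain ⟨j0, hj0⟩ := hT
  have hd : 1 ≤ d := Fin.pos j0
  have hq : 0 < q := Nat.pos_of_ne_zero (NeZero.ne q)
  have hpow : q ^ (d - 1) * q = q ^ d := by
    rw [← pow_succ, Nat.sub_add_cancel hd]
  set f : (Fin d → ZMod q) → ZMod q := fun β => c - ∑ j ∈ T.erase j0, β j with hfdef
  clear_value f
  have hf : ∀ β x, f (update β j0 x) = f β := by
    intro β x
    simp only [hfdef]
    congr 1
    apply Finset.sum_congr rfl
    intro j hj
    exact update_of_ne (Finset.ne_of_mem_erase hj) _ _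
  have hrw : (univ.filter fun β : Fin d → ZMod q => ∑ j ∈ T, β j = c)
      = (univ.filter fun β : Fin d → ZMod q => β j0 = f β ∧ True) := by
    apply Finset.filter_congr
    intro β _
    simp only [and_true, hfdef]
    rw [eq_sub_iff_add_eq, Finset.add_sum_erase T _ hj0]
  rw [hrw, card_shift j0 f hf (fun _ => True) (fun _ _ => Iff.rfl)]
  have h2 : (univ.filter fun β : Fin d → ZMod q => β j0 = 0 ∧ True)
      = (univ.filter fun β : Fin d → ZMod q => β j0 = 0) := by
    apply Finset.filter_congr; intro x _; simp
  rw [h2]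
  have h := card_eval_zero (q := q) j0
  exact Nat.eq_of_mul_eq_mul_right hq (by rw [h, hpow])

lemma count_two_aux (T S : Finset (Fin d))
    (j0 : Fin d) (hj0T : j0 ∈ T) (hj0S : j0 ∉ S)
    (j1 : Fin d) (hj1 : j1 ∈ S) :
    (univ.filter fun β : Fin d → ZMod q =>
      (∑ j ∈ T, β j = 1) ∧ (∑ j ∈ S, β j = 1)).card = q ^ (d - 2) := by
  classical
  have hne : j1 ≠ j0 := by rintro rfl; exact hj0S hj1
  have hd2 : 2 ≤ d := by
    have h0 := j0.isLt
    have h1 := j1.isLt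
    have : (j1 : ℕ) ≠ (j0 : ℕ) := fun h => hne (Fin.ext h)
    omega
  have hq : 0 < q := Nat.pos_of_ne_zero (NeZero.ne q)
  have hpow1 : q ^ (d - 2) * q = q ^ (d - 1) := by
    have he : d - 2 + 1 = d - 1 := by omega
    rw [← pow_succ, he]
  have hpow2 : q ^ (d - 1) * q = q ^ d := by
    have he : d - 1 + 1 = d := by omega
    rw [← pow_succ, he]
  set f : (Fin d → ZMod q) → ZMod q := fun β => 1 - ∑ j ∈ T.erase j0, β j with hfdef
  set g : (Fin d → ZMod q) → ZMod q := fun β => 1 - ∑ j ∈ S.erase j1, β j with hgdef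
  clear_value f g
  have hf : ∀ β x, f (update β j0 x) = f β := by
    intro β x
    simp only [hfdef]
    congr 1
    exact Finset.sum_congr rfl fun j hj => update_of_ne (Finset.ne_of_mem_erase hj) _ _
  have hgj1 : ∀ β x, g (update β j1 x) = g β := by
    intro β x
    simp only [hgdef]
    congr 1
    exact Finset.sum_congr rfl fun j hj => update_of_ne (Finset.ne_of_mem_erase hj) _ _
  have hsumS : ∀ (β : Fin d → ZMod q), (∑ j ∈ S, β j = 1) ↔ β j1 = g β := by
    intro β
    simp only [hgdef]
    rw [eq_sub_iff_add_eq, Finset.add_sum_erase S _ hj1]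
  have hsumT : ∀ (β : Fin d → ZMod q), (∑ j ∈ T, β j = 1) ↔ β j0 = f β := by
    intro β
    simp only [hfdef]
    rw [eq_sub_iff_add_eq, Finset.add_sum_erase T _ hj0T]
  have hPj0 : ∀ (β : Fin d → ZMod q) x,
      (∑ j ∈ S, update β j0 x j = 1) ↔ (∑ j ∈ S, β j = 1) := by
    intro β x
    have : ∑ j ∈ S, update β j0 x j = ∑ j ∈ S, β j :=
      Finset.sum_congr rfl fun j hj => update_of_ne (by rintro rfl; exact hj0S hj) _ _
    rw [this]
  have step1 : (univ.filter fun β : Fin d → ZMod q =>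
      (∑ j ∈ T, β j = 1) ∧ (∑ j ∈ S, β j = 1)).card
      = (univ.filter fun β : Fin d → ZMod q =>
        β j0 = 0 ∧ (∑ j ∈ S, β j = 1)).card := by
    rw [show (univ.filter fun β : Fin d → ZMod q =>
        (∑ j ∈ T, β j = 1) ∧ (∑ j ∈ S, β j = 1))
        = (univ.filter fun β : Fin d → ZMod q =>
          β j0 = f β ∧ (∑ j ∈ S, β j = 1)) from
      Finset.filter_congr fun β _ => by rw [hsumT β]]
    exact card_shift j0 f hf (fun β => ∑ j ∈ S, β j = 1) hPj0
  have step2 : (univ.filter fun β : Fin d → ZMod q =>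
      β j0 = 0 ∧ (∑ j ∈ S, β j = 1)).card
      = (univ.filter fun β : Fin d → ZMod q =>
        β j1 = 0 ∧ β j0 = 0).card := by
    rw [show (univ.filter fun β : Fin d → ZMod q =>
        β j0 = 0 ∧ (∑ j ∈ S, β j = 1))
        = (univ.filter fun β : Fin d → ZMod q =>
          β j1 = g β ∧ β j0 = 0) from
      Finset.filter_congr fun β _ => by rw [hsumS β]; tauto]
    exact card_shift j1 g hgj1 (fun β => β j0 = 0)
      (fun β x => by simp only [update_of_ne (Ne.symm hne)])
  have step3 : (univ.filter fun β : Fin d → ZMod q =>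
      β j1 = 0 ∧ β j0 = 0).card * q
      = (univ.filter fun β : Fin d → ZMod q => β j0 = 0).card :=
    card_mul_q j1 (fun β => β j0 = 0)
      (fun β x => by simp only [update_of_ne (Ne.symm hne)])
  have step4 := card_eval_zero (q := q) j0
  rw [step1, step2]
  have hcard1 : (univ.filter fun β : Fin d → ZMod q => β j0 = 0).card = q ^ (d - 1) :=
    Nat.eq_of_mul_eq_mul_right hq (by rw [step4, hpow2])
  exact Nat.eq_of_mul_eq_mul_right hq (by rw [step3, hcard1, hpow1])

lemma count_two (T S : Finset (Fin d)) (hT : T.Nonempty) (hS : S.Nonempty) (hTS : T ≠ S) :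
    (univ.filter fun β : Fin d → ZMod q =>
      (∑ j ∈ T, β j = 1) ∧ (∑ j ∈ S, β j = 1)).card = q ^ (d - 2) := by
  classical
  by_cases hsub : T ⊆ S
  · obtain ⟨j0, hj0S, hj0T⟩ := Finset.exists_of_ssubset (ssubset_of_subset_of_ne hsub hTS)
    obtain ⟨j1, hj1⟩ := hT
    rw [show (univ.filter fun β : Fin d → ZMod q =>
        (∑ j ∈ T, β j = 1) ∧ (∑ j ∈ S, β j = 1))
        = (univ.filter fun β : Fin d → ZMod q =>
          (∑ j ∈ S, β j = 1) ∧ (∑ j ∈ T, β j = 1)) from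
      Finset.filter_congr fun β _ => by tauto]
    exact count_two_aux S T j0 hj0S hj0T j1 hj1
  · obtain ⟨j0, hj0T, hj0S⟩ := Finset.not_subset.1 hsub
    obtain ⟨j1, hj1⟩ := hS
    exact count_two_aux T S j0 hj0T hj0S j1 hj1

/-- Cardinality of the set of nonempty subsets. -/
lemma card_nonempty_subsets (d : ℕ) :
    (univ.filter fun T : Finset (Fin d) => T.Nonempty).card = 2 ^ d - 1 := by
  have h : (univ.filter fun T : Finset (Fin d) => T.Nonempty) = univ.erase ∅ := by
    ext T
    simp [Finset.nonempty_iff_ne_empty]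
  rw [h, Finset.card_erase_of_mem (mem_univ _), card_univ, Fintype.card_finset,
    Fintype.card_fin]

/-- First moment. -/
lemma sum_X (q d : ℕ) [NeZero q] :
    ∑ β : Fin d → ZMod q,
        ((univ.filter fun T : Finset (Fin d) => T.Nonempty).filter
          fun T => ∑ j ∈ T, β j = 1).card
      = (2 ^ d - 1) * q ^ (d - 1) := by
  classical
  have h1 : ∀ β : Fin d → ZMod q,
      ((univ.filter fun T : Finset (Fin d) => T.Nonempty).filter
        fun T => ∑ j ∈ T, β j = 1).card
      = ∑ T ∈ univ.filter fun T : Finset (Fin d) => T.Nonempty,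
          if ∑ j ∈ T, β j = 1 then 1 else 0 := fun β => Finset.card_filter _ _
  rw [Finset.sum_congr rfl fun β _ => h1 β, Finset.sum_comm]
  have h2 : ∀ T ∈ univ.filter fun T : Finset (Fin d) => T.Nonempty,
      (∑ β : Fin d → ZMod q, if ∑ j ∈ T, β j = 1 then 1 else 0) = q ^ (d - 1) := by
    intro T hT
    rw [← Finset.card_filter]
    exact count_one T (mem_filter.1 hT).2 1
  rw [Finset.sum_congr rfl h2, Finset.sum_const, smul_eq_mul, card_nonempty_subsets]

/-- Second moment. -/
lemma sum_X_sq (q d : ℕ) [NeZero q] :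
    ∑ β : Fin d → ZMod q,
        (((univ.filter fun T : Finset (Fin d) => T.Nonempty).filter
          fun T => ∑ j ∈ T, β j = 1).card) ^ 2
      = (2 ^ d - 1) * q ^ (d - 1) + (2 ^ d - 1) * ((2 ^ d - 1) - 1) * q ^ (d - 2) := by
  classical
  set 𝒯 := univ.filter fun T : Finset (Fin d) => T.Nonempty with h𝒯
  have h1 : ∀ β : Fin d → ZMod q,
      ((𝒯.filter fun T => ∑ j ∈ T, β j = 1).card) ^ 2
      = ∑ T ∈ 𝒯, ∑ S ∈ 𝒯,
          ((if ∑ j ∈ T, β j = 1 then 1 else 0) * (if ∑ j ∈ S, β j = 1 then 1 else 0)) := by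
    intro β
    rw [Finset.card_filter, sq, Finset.sum_mul_sum]
  rw [Finset.sum_congr rfl fun β _ => h1 β, Finset.sum_comm]
  have h2 : ∀ T ∈ 𝒯,
      (∑ β : Fin d → ZMod q, ∑ S ∈ 𝒯,
        ((if ∑ j ∈ T, β j = 1 then 1 else 0) * (if ∑ j ∈ S, β j = 1 then 1 else 0)))
      = q ^ (d - 1) + (𝒯.card - 1) * q ^ (d - 2) := by
    intro T hT
    rw [Finset.sum_comm]
    have hpair : ∀ S ∈ 𝒯,
        (∑ β : Fin d → ZMod q,
          ((if ∑ j ∈ T, β j = 1 then 1 else 0) * (if ∑ j ∈ S, β j = 1 then 1 else 0)))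
        = (univ.filter fun β : Fin d → ZMod q =>
            (∑ j ∈ T, β j = 1) ∧ (∑ j ∈ S, β j = 1)).card := by
      intro S _
      rw [Finset.card_filter]
      apply Finset.sum_congr rfl
      intro β _
      by_cases hTb : ∑ j ∈ T, β j = 1 <;> by_cases hSb : ∑ j ∈ S, β j = 1 <;>
        simp [hTb, hSb]
    rw [Finset.sum_congr rfl hpair]
    rw [← Finset.add_sum_erase 𝒯 _ hT]
    have hself : (univ.filter fun β : Fin d → ZMod q =>
        (∑ j ∈ T, β j = 1) ∧ (∑ j ∈ T, β j = 1)).card = q ^ (d - 1) := by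
      rw [show (univ.filter fun β : Fin d → ZMod q =>
          (∑ j ∈ T, β j = 1) ∧ (∑ j ∈ T, β j = 1))
          = (univ.filter fun β : Fin d → ZMod q => ∑ j ∈ T, β j = 1) from
        Finset.filter_congr fun β _ => by tauto]
      exact count_one T (mem_filter.1 hT).2 1
    have hoff : ∀ S ∈ 𝒯.erase T,
        (univ.filter fun β : Fin d → ZMod q =>
          (∑ j ∈ T, β j = 1) ∧ (∑ j ∈ S, β j = 1)).card = q ^ (d - 2) := by
      intro S hS
      exact count_two T S (mem_filter.1 hT).2 (mem_filter.1 (mem_of_mem_erase hS)).2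
        (Ne.symm (Finset.ne_of_mem_erase hS))
    rw [hself, Finset.sum_congr rfl hoff, Finset.sum_const, smul_eq_mul,
      Finset.card_erase_of_mem hT]
  rw [Finset.sum_congr rfl h2, Finset.sum_const, smul_eq_mul]
  have hM : 𝒯.card = 2 ^ d - 1 := card_nonempty_subsets d
  rw [hM, Nat.mul_add, Nat.mul_comm (2 ^ d - 1) ((2 ^ d - 1 - 1) * q ^ (d - 2))]
  ring

end Counting

/-- Clean real-arithmetic endgame. -/
lemma final_ineq (p M P N : ℝ) (hp : 2 ≤ p) (hM : 1 ≤ M) (hP : 0 < P) (hN : 0 ≤ N)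
    (key : (M * (P * p)) ^ 2 ≤ (P * p ^ 2 - N) * (M * (P * p) + M * (M - 1) * P)) :
    N / (P * p ^ 2) ≤ (p - 1) / M := by
  have hp0 : 0 < p := by linarith
  have hM0 : 0 < M := by linarith
  rw [div_le_div_iff₀ (by positivity) hM0]
  have key2 : (N * (p + M - 1)) * (M * P) ≤ (P * p ^ 2 * (p - 1)) * (M * P) := by
    nlinarith [key]
  have key3 : N * (p + M - 1) ≤ P * p ^ 2 * (p - 1) :=
    le_of_mul_le_mul_right key2 (by positivity)
  nlinarith [mul_nonneg hN (by linarith : (0:ℝ) ≤ p - 1)]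

/-- For i.i.d. uniform `β : Fin d → ZMod q`, the probability that no nonempty
subset `T` satisfies `∑_{j ∈ T} β j = 1` is at most `(q-1)/(2^d - 1)`. -/
theorem prob_no_subset_sum_one (q d : ℕ) [NeZero q] (hq : q.Prime) (hd : 1 ≤ d) :
    ((Finset.univ.filter fun β : Fin d → ZMod q =>
        ¬ ∃ T : Finset (Fin d), T.Nonempty ∧ ∑ j ∈ T, β j = 1).card : ℝ) /
        (q : ℝ) ^ d ≤ ((q : ℝ) - 1) / (2 ^ d - 1) := by
  classical
  have hq2 : 2 ≤ q := hq.two_le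
  have hqR : (2 : ℝ) ≤ (q : ℝ) := by exact_mod_cast hq2
  rcases Nat.lt_or_ge d 2 with hd2 | hd2
  · -- the case d = 1
    interval_cases d
    have hcard_le : ((Finset.univ.filter fun β : Fin 1 → ZMod q =>
        ¬ ∃ T : Finset (Fin 1), T.Nonempty ∧ ∑ j ∈ T, β j = 1).card : ℝ) ≤ (q : ℝ) ^ 1 := by
      have h := Finset.card_filter_le (univ : Finset (Fin 1 → ZMod q))
        (fun β => ¬ ∃ T : Finset (Fin 1), T.Nonempty ∧ ∑ j ∈ T, β j = 1)
      have hc : (univ : Finset (Fin 1 → ZMod q)).card = q ^ 1 := by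
        rw [card_univ, Fintype.card_fun, ZMod.card, Fintype.card_fin]
      rw [hc] at h
      exact_mod_cast h
    have h1 : ((Finset.univ.filter fun β : Fin 1 → ZMod q =>
        ¬ ∃ T : Finset (Fin 1), T.Nonempty ∧ ∑ j ∈ T, β j = 1).card : ℝ) / (q : ℝ) ^ 1 ≤ 1 :=
      div_le_one_of_le₀ hcard_le (by positivity)
    have h2 : ((2 : ℝ) ^ 1 - 1) = 1 := by norm_num
    rw [h2, div_one]
    calc ((Finset.univ.filter fun β : Fin 1 → ZMod q =>
        ¬ ∃ T : Finset (Fin 1), T.Nonempty ∧ ∑ j ∈ T, β j = 1).card : ℝ) / (q : ℝ) ^ 1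
        ≤ 1 := h1
      _ ≤ (q : ℝ) - 1 := by linarith only [hqR]
  · -- the main case d ≥ 2
    obtain ⟨e, rfl⟩ : ∃ e, d = e + 2 := ⟨d - 2, by omega⟩
    have he1 : e + 2 - 1 = e + 1 := by omega
    have he2 : e + 2 - 2 = e := by omega
    have hene : e + 2 ≠ 0 := by omega
    have h21 : (1 : ℕ) ≤ 2 ^ (e + 2) := Nat.one_le_two_pow
    have h2powR : (2 : ℝ) ≤ (2 : ℝ) ^ (e + 2) :=
      le_self_pow₀ one_le_two hene
    have h22 : (1 : ℕ) ≤ 2 ^ (e + 2) - 1 := by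
      have : (4 : ℕ) ≤ 2 ^ (e + 2) := by
        calc (4 : ℕ) = 2 ^ 2 := by norm_num
        _ ≤ 2 ^ (e + 2) := Nat.pow_le_pow_right (by norm_num) (by omega)
      omega
    have hMcast : (((2 : ℕ) ^ (e + 2) - 1 : ℕ) : ℝ) = (2 : ℝ) ^ (e + 2) - 1 := by
      rw [Nat.cast_sub h21]
      push_cast
      ring
    have hM1cast : (((2 : ℕ) ^ (e + 2) - 1 - 1 : ℕ) : ℝ) = ((2 : ℝ) ^ (e + 2) - 1) - 1 := by
      rw [Nat.cast_sub h22, Nat.cast_sub h21]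
      push_cast
      ring
    have hMr1 : (1 : ℝ) ≤ (2 : ℝ) ^ (e + 2) - 1 := by linarith only [h2powR]
    -- nat moment computations
    have hS1 := sum_X q (e + 2)
    have hS2 := sum_X_sq q (e + 2)
    rw [he1] at hS1
    rw [he1, he2] at hS2
    set X : (Fin (e + 2) → ZMod q) → ℕ := fun β =>
      ((univ.filter fun T : Finset (Fin (e + 2)) => T.Nonempty).filter
        fun T => ∑ j ∈ T, β j = 1).card with hX
    set bad := Finset.univ.filter fun β : Fin (e + 2) → ZMod q =>
        ¬ ∃ T : Finset (Fin (e + 2)), T.Nonempty ∧ ∑ j ∈ T, β j = 1 with hbad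
    set good := Finset.univ.filter fun β : Fin (e + 2) → ZMod q =>
        (∃ T : Finset (Fin (e + 2)), T.Nonempty ∧ ∑ j ∈ T, β j = 1) with hgoodd
    have hsplit : good.card + bad.card = q ^ (e + 2) := by
      rw [hgoodd, hbad, Finset.card_filter_add_card_filter_not,
        card_univ, Fintype.card_fun, ZMod.card, Fintype.card_fin]
    have hXzero : ∀ β : Fin (e + 2) → ZMod q,
        (¬ ∃ T : Finset (Fin (e + 2)), T.Nonempty ∧ ∑ j ∈ T, β j = 1) → X β = 0 := by
      intro β hβ
      rw [hX]
      rw [Finset.card_eq_zero, Finset.filter_eq_empty_iff]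
      intro T hT h1
      exact hβ ⟨T, (mem_filter.1 hT).2, h1⟩
    have hgs : ∑ β ∈ good, X β = ∑ β : Fin (e + 2) → ZMod q, X β := by
      apply Finset.sum_subset (Finset.subset_univ good)
      intro β _ hβ
      exact hXzero β fun hcon => hβ (mem_filter.2 ⟨mem_univ _, hcon⟩)
    have hgs2 : ∑ β ∈ good, (X β) ^ 2 = ∑ β : Fin (e + 2) → ZMod q, (X β) ^ 2 := by
      apply Finset.sum_subset (Finset.subset_univ good)
      intro β _ hβ
      rw [hXzero β fun hcon => hβ (mem_filter.2 ⟨mem_univ _, hcon⟩)]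
      norm_num
    have hCS : (∑ β ∈ good, (X β : ℝ)) ^ 2
        ≤ (good.card : ℝ) * ∑ β ∈ good, (X β : ℝ) ^ 2 :=
      sq_sum_le_card_mul_sum_sq
    -- real abbreviations
    -- cast the moment identities
    have hS1R : (∑ β ∈ good, (X β : ℝ))
        = ((2 : ℝ) ^ (e + 2) - 1) * ((q : ℝ) ^ e * (q : ℝ)) := by
      rw [← Nat.cast_sum, hgs, hS1, Nat.cast_mul, hMcast, Nat.cast_pow, pow_succ]
      push_cast
      ring
    have hS2R : (∑ β ∈ good, (X β : ℝ) ^ 2)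
        = ((2 : ℝ) ^ (e + 2) - 1) * ((q : ℝ) ^ e * (q : ℝ))
          + ((2 : ℝ) ^ (e + 2) - 1) * (((2 : ℝ) ^ (e + 2) - 1) - 1) * (q : ℝ) ^ e := by
      have : ∑ β ∈ good, (X β : ℝ) ^ 2 = ((∑ β ∈ good, (X β) ^ 2 : ℕ) : ℝ) := by
        push_cast
        rfl
      rw [this, hgs2, hS2, Nat.cast_add, Nat.cast_mul, Nat.cast_mul, Nat.cast_mul,
        hMcast, hM1cast, Nat.cast_pow, Nat.cast_pow, pow_succ]
      push_cast
      ring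
    have hGR : (good.card : ℝ) = (q : ℝ) ^ e * (q : ℝ) ^ 2 - (bad.card : ℝ) := by
      have h := hsplit
      have : (good.card : ℝ) + (bad.card : ℝ) = ((q : ℝ)) ^ (e + 2) := by
        exact_mod_cast congrArg (Nat.cast : ℕ → ℝ) h
      rw [pow_add] at this
      linarith only [this]
    have key := hCS
    rw [hS1R, hS2R, hGR] at key
    -- finish
    have hgoal : ((q : ℝ)) ^ (e + 2) = (q : ℝ) ^ e * (q : ℝ) ^ 2 := pow_add _ _ _
    rw [hgoal]
    exact final_ineq (q : ℝ) ((2 : ℝ) ^ (e + 2) - 1) ((q : ℝ) ^ e) (bad.card : ℝ)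
      hqR hMr1 (by positivity) (by positivity) key
end

section
/- Let q ≥ 5 be a prime and let A ⊆ F_q be a set such that F_q \ A = {±a_1, ..., ±a_k} for some 1 ≤ a_1 < ... < a_k ≤ ⌊q/2⌋ with 1 ≤ k < ⌊q/2⌋ (so A is symmetric, contains 0, and contains some nonzero element). Given m ≥ k^{k(k-1)/2}·(n+k+1)^{k+1} vectors v_1, ..., v_m ∈ F_q^n, there exist coefficients α_1, ..., α_m ∈ A, not all zero, with Σ α_i v_i = 0. -/
/-- Nontrivial `A`-zero-sum where the complement of `A` consists of `k`
antipodal pairs `{±a_i}` of nonzero elements, whenever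
`m ≥ k^{k(k-1)/2}·(n+k+1)^{k+1}` (worst-case vectors). -/
theorem cis_centered (q : ℕ) (hq : q.Prime) (hq5 : 5 ≤ q)
    (k n m : ℕ) (hk1 : 1 ≤ k) (hk2 : k < q / 2)
    (a : Fin k → ℕ) (hmono : StrictMono a)
    (ha1 : ∀ i, 1 ≤ a i) (ha2 : ∀ i, a i ≤ q / 2)
    (A : Finset (ZMod q))
    (hA : ∀ x : ZMod q, x ∈ A ↔ ∀ i, x ≠ (a i : ZMod q) ∧ x ≠ -(a i : ZMod q))
    (hm : k ^ (k * (k - 1) / 2) * (n + k + 1) ^ (k + 1) ≤ m)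
    (v : Fin m → Fin n → ZMod q) :
    ∃ α : Fin m → ZMod q, (∀ i, α i ∈ A) ∧ α ≠ 0 ∧ ∑ i, α i • v i = 0 := by
  classical
  have hodd : q % 2 = 1 := Nat.odd_iff.mp (hq.odd_of_ne_two (by omega))
  have hq3 : 2 * k + 3 ≤ q := by omega
  haveI : NeZero q := ⟨by omega⟩
  have h0A : (0 : ZMod q) ∈ A := by
    rw [hA]
    intro i
    have hane : ((a i : ℕ) : ZMod q) ≠ 0 := by
      intro h
      have hdvd := (ZMod.natCast_eq_zero_iff (a i) q).mp h
      have hle := Nat.le_of_dvd (ha1 i) hdvd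
      have := ha2 i
      omega
    exact ⟨fun h => hane h.symm, fun h => hane (by rw [← neg_eq_zero, ← h])⟩
  have hsymm : ∀ x : ZMod q, x ∈ A → -x ∈ A := by
    intro x hx
    rw [hA] at hx ⊢
    intro i
    obtain ⟨h1, h2⟩ := hx i
    refine ⟨fun h => h2 ?_, fun h => h1 ?_⟩
    · rw [← neg_neg x, h]
    · rw [← neg_neg x, h, neg_neg]
  -- a maximal difference-avoiding set
  obtain ⟨S, hSmem, hSmax⟩ := Finset.exists_max_image
      ((Finset.univ : Finset (ZMod q)).powerset.filter
        (fun T => ∀ x ∈ T, ∀ y ∈ T, x - y ∈ A)) Finset.card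
      ⟨∅, by simp⟩
  rw [Finset.mem_filter] at hSmem
  have hSdiff : ∀ x ∈ S, ∀ y ∈ S, x - y ∈ A := hSmem.2
  set C : Finset (ZMod q) :=
    S ∪ Finset.univ.biUnion (fun j : Fin k =>
      S.image (· + ((a j : ℕ) : ZMod q)) ∪ S.image (· - ((a j : ℕ) : ZMod q))) with hC
  have hcover : ∀ z : ZMod q, z ∈ C := by
    intro z
    by_contra hz
    have hzS : z ∉ S := fun h => hz (Finset.mem_union_left _ h)
    have hgood : ∀ y ∈ S, z - y ∈ A := by
      intro y hy
      rw [hA]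
      intro j
      constructor
      · intro h
        apply hz
        refine Finset.mem_union_right _ (Finset.mem_biUnion.mpr ⟨j, Finset.mem_univ j, ?_⟩)
        refine Finset.mem_union_left _ (Finset.mem_image.mpr ⟨y, hy, ?_⟩)
        show y + ((a j : ℕ) : ZMod q) = z
        rw [← h]; ring
      · intro h
        apply hz
        refine Finset.mem_union_right _ (Finset.mem_biUnion.mpr ⟨j, Finset.mem_univ j, ?_⟩)
        refine Finset.mem_union_right _ (Finset.mem_image.mpr ⟨y, hy, ?_⟩)
        show y - ((a j : ℕ) : ZMod q) = z
        rw [show ((a j : ℕ) : ZMod q) = -(z - y) by rw [h, neg_neg]]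
        ring
    have hP : ∀ x ∈ insert z S, ∀ y ∈ insert z S, x - y ∈ A := by
      intro x hx y hy
      rcases Finset.mem_insert.mp hx with rfl | hx' <;>
        rcases Finset.mem_insert.mp hy with rfl | hy'
      · simpa using h0A
      · exact hgood y hy'
      · have := hsymm _ (hgood x hx')
        simpa using this
      · exact hSdiff x hx' y hy'
    have hle := hSmax (insert z S)
      (Finset.mem_filter.mpr ⟨Finset.mem_powerset.mpr (Finset.subset_univ _), hP⟩)
    rw [Finset.card_insert_of_notMem hzS] at hle
    omega
  have hqle : q ≤ (2 * k + 1) * S.card := by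
    have h1 : (Finset.univ : Finset (ZMod q)).card ≤ C.card :=
      Finset.card_le_card (fun z _ => hcover z)
    rw [Finset.card_univ, ZMod.card] at h1
    have h2 : C.card ≤ S.card + k * (2 * S.card) := by
      calc C.card ≤ S.card + (Finset.univ.biUnion (fun j : Fin k =>
            S.image (· + ((a j : ℕ) : ZMod q)) ∪ S.image (· - ((a j : ℕ) : ZMod q)))).card :=
            Finset.card_union_le _ _
        _ ≤ S.card + ∑ j : Fin k, ((S.image (· + ((a j : ℕ) : ZMod q))) ∪
              (S.image (· - ((a j : ℕ) : ZMod q)))).card :=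
            Nat.add_le_add_left (Finset.card_biUnion_le) _
        _ ≤ S.card + ∑ j : Fin k, (2 * S.card) := by
            refine Nat.add_le_add_left (Finset.sum_le_sum fun j _ => ?_) _
            calc ((S.image (· + ((a j : ℕ) : ZMod q))) ∪
                  (S.image (· - ((a j : ℕ) : ZMod q)))).card
                ≤ (S.image (· + ((a j : ℕ) : ZMod q))).card +
                  (S.image (· - ((a j : ℕ) : ZMod q))).card := Finset.card_union_le _ _
              _ ≤ S.card + S.card := Nat.add_le_add (Finset.card_image_le) (Finset.card_image_le)
              _ = 2 * S.card := by ring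
        _ = S.card + k * (2 * S.card) := by simp [Finset.sum_const, mul_comm]
    nlinarith
  have hs2 : 2 ≤ S.card := by nlinarith
  have hm2 : (k + 2) * n < m := by
    have h1 : (n + k + 1) ^ 2 ≤ (n + k + 1) ^ (k + 1) :=
      Nat.pow_le_pow_right (by omega) (by omega)
    have h2 : 1 ≤ k ^ (k * (k - 1) / 2) := Nat.one_le_pow _ _ (by omega)
    have h3 : (k + 2) * n + 1 ≤ (n + k + 1) ^ 2 := by nlinarith
    have h4 : (n + k + 1) ^ (k + 1) ≤ k ^ (k * (k - 1) / 2) * (n + k + 1) ^ (k + 1) :=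
      Nat.le_mul_of_pos_left _ (by omega)
    omega
  have hpow : q ^ n < S.card ^ m := by
    have e1 : 2 * k + 1 ≤ 2 ^ (k + 1) := by
      have h := Nat.lt_two_pow_self (n := k)
      have h2 : 2 ^ (k + 1) = 2 ^ k * 2 := pow_succ 2 k
      omega
    calc q ^ n ≤ ((2 * k + 1) * S.card) ^ n := Nat.pow_le_pow_left hqle n
      _ = (2 * k + 1) ^ n * S.card ^ n := mul_pow _ _ _
      _ ≤ (2 ^ (k + 1)) ^ n * S.card ^ n := by gcongr
      _ ≤ (S.card ^ (k + 1)) ^ n * S.card ^ n := by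
          gcongr
      _ = S.card ^ ((k + 2) * n) := by
          rw [← pow_mul, ← pow_add]
          congr 1
          ring
      _ < S.card ^ m := Nat.pow_lt_pow_right hs2 hm2
  obtain ⟨x, hx, y, hy, hxy, heq⟩ :=
    Finset.exists_ne_map_eq_of_card_lt_of_maps_to
      (s := Fintype.piFinset (fun _ : Fin m => S))
      (t := (Finset.univ : Finset (Fin n → ZMod q)))
      (f := fun β => ∑ i, β i • v i)
      (by
        rw [Finset.card_univ]
        have hc : Fintype.card (Fin n → ZMod q) = q ^ n := by
          simp [ZMod.card]
        rw [hc, Fintype.card_piFinset]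
        simpa using hpow)
      (fun x _ => Finset.mem_univ _)
  refine ⟨x - y, ?_, ?_, ?_⟩
  · intro i
    exact hSdiff _ (Fintype.mem_piFinset.mp hx i) _ (Fintype.mem_piFinset.mp hy i)
  · intro h
    apply hxy
    funext i
    have := congrFun h i
    simpa [sub_eq_zero] using this
  · simp only [Pi.sub_apply, sub_smul]
    rw [Finset.sum_sub_distrib]
    rw [heq, sub_self]
end

section
/- Let q ≥ 5 be a prime and let k be an integer with 2 ≤ k ≤ ⌊q/2⌋. Given m ≥ (k-1)^{(k-1)(k-2)/2}·(n+k)^k vectors v_1, ..., v_m in F_q^n, there exist integers α_1, ..., α_m with |α_i| ≤ ⌊q/(2k)⌋, not all zero, such that Σ α_i v_i = 0 in F_q^n. -/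
/-- For any integer `2 ≤ k ≤ ⌊q/2⌋` and `m ≥ (k-1)^{(k-1)(k-2)/2}·(n+k)^k`
vectors in `F_q^n`, there is a nontrivial `(±⌊q/(2k)⌋)`-zero-sum. -/
theorem sis_general_k (q : ℕ) (hq : q.Prime) (hq5 : 5 ≤ q)
    (k n m : ℕ) (hk1 : 2 ≤ k) (hk2 : k ≤ q / 2)
    (hm : (k - 1) ^ ((k - 1) * (k - 2) / 2) * (n + k) ^ k ≤ m)
    (v : Fin m → Fin n → ZMod q) :
    ∃ α : Fin m → ℤ, (∀ i, |α i| ≤ (q / (2 * k) : ℕ)) ∧ α ≠ 0 ∧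
      ∑ i, (α i : ZMod q) • v i = 0 := by
  haveI : NeZero q := ⟨by omega⟩
  set h : ℕ := q / (2 * k) with hh
  set t : ℕ := h + 1 with ht
  have ht2 : 2 ≤ t := by
    have : 1 ≤ h := by
      rw [hh]
      exact Nat.one_le_div_iff (by omega) |>.2 (by omega)
    omega
  -- q < t ^ (2 * k)
  have hq_lt : q < t ^ (2 * k) := by
    have h1 : q < t * (2 * k) := by
      have := (Nat.div_lt_iff_lt_mul (show 0 < 2 * k by omega)).1
        (show q / (2 * k) < t by omega)
      exact this
    have h2 : 2 * k ≤ 2 ^ (2 * k - 1) := by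
      have hk : k < 2 ^ k := Nat.lt_two_pow_self
      have : 2 * k < 2 ^ (k + 1) := by
        rw [pow_succ]; omega
      have hle : 2 ^ (k + 1) ≤ 2 ^ (2 * k - 1) :=
        Nat.pow_le_pow_right (by omega) (by omega)
      omega
    have h3 : 2 ^ (2 * k - 1) ≤ t ^ (2 * k - 1) :=
      Nat.pow_le_pow_left (by omega) _
    have h4 : t ^ (2 * k) = t ^ (2 * k - 1) * t := by
      rw [← pow_succ]; congr 1; omega
    calc q < t * (2 * k) := h1
      _ ≤ t * t ^ (2 * k - 1) := Nat.mul_le_mul_left t (h2.trans h3)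
      _ = t ^ (2 * k) := by rw [h4, Nat.mul_comm]
  -- m bounds
  have hm1 : (n + k) ^ k ≤ m := by
    have : 1 ≤ (k - 1) ^ ((k - 1) * (k - 2) / 2) :=
      Nat.one_le_pow _ _ (by omega)
    calc (n + k) ^ k = 1 * (n + k) ^ k := (one_mul _).symm
      _ ≤ (k - 1) ^ ((k - 1) * (k - 2) / 2) * (n + k) ^ k :=
          Nat.mul_le_mul_right _ this
      _ ≤ m := hm
  have hm2 : 2 * k * n ≤ m := by
    have h5 : (n + k) ^ 2 ≤ (n + k) ^ k := Nat.pow_le_pow_right (by omega) hk1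
    have h6 : 2 * k * n ≤ (n + k) ^ 2 := by nlinarith
    omega
  have hm3 : 1 ≤ m := by
    have : 2 ^ 2 ≤ (n + k) ^ k := by
      calc (2:ℕ) ^ 2 ≤ (n + k) ^ 2 := Nat.pow_le_pow_left (by omega) 2
        _ ≤ (n + k) ^ k := Nat.pow_le_pow_right (by omega) hk1
    omega
  -- main counting inequality
  have hcount : q ^ n < t ^ m := by
    rcases Nat.eq_zero_or_pos n with hn | hn
    · subst hn
      simpa using Nat.one_lt_pow (by omega) (by omega)
    · calc q ^ n < (t ^ (2 * k)) ^ n :=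
            Nat.pow_lt_pow_left hq_lt (by omega)
        _ = t ^ (2 * k * n) := by rw [← pow_mul]
        _ ≤ t ^ m := Nat.pow_le_pow_right (by omega) hm2
  -- pigeonhole
  set f : (Fin m → Fin t) → (Fin n → ZMod q) :=
    fun ε => ∑ i, ((ε i : ℕ) : ZMod q) • v i with hf
  have hcard : Fintype.card (Fin n → ZMod q) < Fintype.card (Fin m → Fin t) := by
    simp [Fintype.card_fun, ZMod.card, hcount]
  obtain ⟨ε, ε', hne, heq⟩ := Fintype.exists_ne_map_eq_of_card_lt f hcard
  refine ⟨fun i => (ε i : ℤ) - (ε' i : ℤ), ?_, ?_, ?_⟩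
  · intro i
    have h1 := (ε i).isLt
    have h2 := (ε' i).isLt
    rw [abs_le]
    constructor <;> push_cast <;> omega
  · intro hzero
    apply hne
    funext i
    have := congrFun hzero i
    simp only [Pi.zero_apply, sub_eq_zero] at this
    have : (ε i : ℕ) = (ε' i : ℕ) := by exact_mod_cast this
    exact Fin.ext this
  · have : ∑ i, ((ε i : ℕ) : ZMod q) • v i = ∑ i, ((ε' i : ℕ) : ZMod q) • v i := heq
    calc ∑ i, (((ε i : ℤ) - (ε' i : ℤ) : ℤ) : ZMod q) • v i
        = ∑ i, (((ε i : ℕ) : ZMod q) • v i - ((ε' i : ℕ) : ZMod q) • v i) := by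
          apply Finset.sum_congr rfl
          intro i _
          push_cast
          rw [sub_smul]
      _ = ∑ i, ((ε i : ℕ) : ZMod q) • v i - ∑ i, ((ε' i : ℕ) : ZMod q) • v i :=
          Finset.sum_sub_distrib _ _
      _ = 0 := by rw [this, sub_self]
end
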